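/- arXiv:2306.07577 — 4 statements merged into one kernel-verified Lean document; each statement's English description precedes it below -/
import Mathlib

section
/- If X1, X2 are i.i.d. gamma random variables with shape α>0 and rate β>0, then E[|X1−X2|/(X1+X2)] = (2^{2α−1} · α · B(α,α))^{−1}, where B is the beta function. -/
open MeasureTheory ProbabilityTheory Real Set

/-- The beta function `B(p,q) = Γ(p)Γ(q)/Γ(p+q)`. -/
noncomputable def betaFun (p q : ℝ) : ℝ := Real.Gamma p * Real.Gamma q / Real.Gamma (p + q)

open MeasureTheory ProbabilityTheory Real Set Filter Topology intervalIntegral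
open scoped ENNReal NNReal

namespace AbsGammaAux

/-- A nonneg-supported ℝ≥0∞ function has zero lintegral on `Iic 0`. -/
lemma lint_Iic_zero {f : ℝ → ℝ≥0∞} (hf : ∀ x < 0, f x = 0) :
    ∫⁻ x in Iic 0, f x = 0 := by
  rw [lintegral_Iic_eq_lintegral_Iio_add_Icc f le_rfl]
  have h1 : ∫⁻ x in Iio (0:ℝ), f x = 0 := by
    rw [setLIntegral_congr_fun (g := fun _ => 0) measurableSet_Iio
      (fun x (hx : x < 0) => hf x hx)]
    simp
  have h2 : ∫⁻ x in Icc (0:ℝ) 0, f x = 0 := by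
    rw [Icc_self]
    exact setLIntegral_measure_zero _ _ Real.volume_singleton
  rw [h1, h2, add_zero]

lemma lint_eq_Ioi {f : ℝ → ℝ≥0∞} (hf : ∀ x < 0, f x = 0) :
    ∫⁻ x, f x = ∫⁻ x in Ioi 0, f x := by
  rw [← lintegral_add_compl f measurableSet_Ioi, compl_Ioi, lint_Iic_zero hf, add_zero]

lemma lint_gammaPDF_Ioi {a r : ℝ} (ha : 0 < a) (hr : 0 < r) :
    ∫⁻ x in Ioi 0, gammaPDF a r x = 1 := by
  rw [← lint_eq_Ioi (fun x hx => gammaPDF_of_neg hx), lintegral_gammaPDF_eq_one ha hr]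

/-- substitution x = y u on `Ioi 0`. -/
lemma lint_scale {y : ℝ} (hy : 0 < y) {f : ℝ → ℝ≥0∞} (hf : Measurable f) :
    ∫⁻ x in Ioi 0, f x = ENNReal.ofReal y * ∫⁻ u in Ioi 0, f (y * u) := by
  have hpre : (fun u : ℝ => y * u) ⁻¹' (Ioi 0) = Ioi 0 := by
    ext u; simp [mem_Ioi, mul_pos_iff_of_pos_left, hy]
  have hmap : (Measure.map (fun u : ℝ => y * u) volume).restrict (Ioi 0)
      = Measure.map (fun u : ℝ => y * u) (volume.restrict (Ioi 0)) := by
    rw [Measure.restrict_map (measurable_const_mul y) measurableSet_Ioi, hpre]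
  have h1 : (Measure.map (fun u : ℝ => y * u) volume) = ENNReal.ofReal |y⁻¹| • volume :=
    Real.map_volume_mul_left hy.ne'
  calc ∫⁻ x in Ioi 0, f x
      = ENNReal.ofReal y * ∫⁻ x, f x ∂((ENNReal.ofReal |y⁻¹| • volume).restrict (Ioi 0)) := by
        rw [Measure.restrict_smul, lintegral_smul_measure, smul_eq_mul, ← mul_assoc,
          abs_of_pos (inv_pos.mpr hy), ← ENNReal.ofReal_mul hy.le, mul_inv_cancel₀ hy.ne',
          ENNReal.ofReal_one, one_mul]
    _ = ENNReal.ofReal y * ∫⁻ u in Ioi 0, f (y * u) := by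
        rw [← h1, hmap, lintegral_map hf (measurable_const_mul y)]


variable {α : ℝ}

noncomputable def φ (α : ℝ) (u : ℝ) : ℝ := |u - 1| / (1 + u) * (u ^ (α - 1) * (1 + u) ^ (-(2 * α)))

noncomputable def G (α : ℝ) (u : ℝ) : ℝ := u ^ α * (1 + u) ^ (-(2 * α))

lemma φ_nonneg (u : ℝ) (hu : 0 < u) : 0 ≤ φ α u := by
  have : (0:ℝ) < 1 + u := by linarith
  unfold φ; positivity

lemma hasDerivAt_G (hα : 0 < α) {u : ℝ} (hu : 0 < u) :
    HasDerivAt (G α) (α * ((1 - u) * (u ^ (α - 1) * (1 + u) ^ (-(2 * α) - 1)))) u := by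
  have h1u : (0:ℝ) < 1 + u := by linarith
  have h1 : HasDerivAt (fun u : ℝ => u ^ α) (α * u ^ (α - 1)) u :=
    Real.hasDerivAt_rpow_const (Or.inl hu.ne')
  have h2 : HasDerivAt (fun u : ℝ => (1 + u) ^ (-(2 * α)))
      (1 * -(2 * α) * (1 + u) ^ (-(2 * α) - 1)) u :=
    ((hasDerivAt_id u).const_add 1).rpow_const (Or.inl h1u.ne')
  have := h1.mul h2
  refine this.congr_deriv (Eq.symm ?_)
  have e1 : (1 + u) ^ (-(2 * α)) = (1 + u) ^ (-(2 * α) - 1) * (1 + u) := by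
    rw [← Real.rpow_add_one h1u.ne']; ring_nf
  have e2 : u ^ α = u ^ (α - 1) * u := by
    rw [← Real.rpow_add_one hu.ne']; ring_nf
  rw [e1, e2]; ring

lemma G_cont (hα : 0 < α) : ContinuousOn (G α) (Icc 0 1) := by
  intro u hu
  have h1u : (1:ℝ) + u ≠ 0 := by have := hu.1; intro h; linarith
  exact ((Real.continuousAt_rpow_const u α (Or.inr hα.le)).mul
    (((continuous_const.add continuous_id).continuousAt).rpow_const
      (Or.inl h1u))).continuousWithinAt

lemma φ_measurable : Measurable (φ α) := by
  unfold φ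
  exact ((measurable_id.sub_const 1).abs.div (measurable_const.add measurable_id)).mul
    ((measurable_id.pow_const _).mul ((measurable_const.add measurable_id).pow_const _))

lemma φ_integrableOn_Ioc (hα : 0 < α) : IntegrableOn (φ α) (Ioc 0 1) := by
  have hg : IntegrableOn (fun u : ℝ => u ^ (α - 1)) (Ioc 0 1) := by
    rw [← intervalIntegrable_iff_integrableOn_Ioc_of_le zero_le_one]
    exact intervalIntegral.intervalIntegrable_rpow' (by linarith)
  refine hg.mono' φ_measurable.aestronglyMeasurable ?_
  rw [ae_restrict_iff' measurableSet_Ioc]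
  refine ae_of_all _ fun u hu => ?_
  obtain ⟨hu0, hu1⟩ := hu
  have h1u : (0:ℝ) < 1 + u := by linarith
  rw [Real.norm_eq_abs, abs_of_nonneg (φ_nonneg u hu0)]
  calc φ α u ≤ 1 * (u ^ (α - 1) * 1) := by
        refine mul_le_mul ?_ ?_ (by positivity) zero_le_one
        · rw [div_le_one h1u]
          calc |u - 1| = 1 - u := by rw [abs_of_nonpos (by linarith)]; ring
            _ ≤ 1 + u := by linarith
        · refine mul_le_mul_of_nonneg_left ?_ (by positivity)
          exact Real.rpow_le_one_of_one_le_of_nonpos (by linarith) (by linarith)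
    _ = u ^ (α - 1) := by ring

lemma φ_le_on_Ioi (hα : 0 < α) {u : ℝ} (hu : 1 ≤ u) : φ α u ≤ u ^ (-α - 1) := by
  have hu0 : (0:ℝ) < u := lt_of_lt_of_le one_pos hu
  have h1u : (0:ℝ) < 1 + u := by linarith
  calc φ α u ≤ 1 * (u ^ (α - 1) * u ^ (-(2 * α))) := by
        refine mul_le_mul ?_ ?_ (by positivity) zero_le_one
        · rw [div_le_one h1u]
          calc |u - 1| = u - 1 := abs_of_nonneg (by linarith)
            _ ≤ 1 + u := by linarith
        · exact mul_le_mul_of_nonneg_left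
            (Real.rpow_le_rpow_of_nonpos hu0 (by linarith) (by linarith)) (by positivity)
    _ = u ^ (-α - 1) := by
        rw [one_mul, ← Real.rpow_add hu0]; ring_nf

lemma φ_integrableOn_Ioi (hα : 0 < α) : IntegrableOn (φ α) (Ioi 1) := by
  have hg : IntegrableOn (fun u : ℝ => u ^ (-α - 1)) (Ioi 1) :=
    integrableOn_Ioi_rpow_of_lt (by linarith) one_pos
  refine hg.mono' φ_measurable.aestronglyMeasurable ?_
  rw [ae_restrict_iff' measurableSet_Ioi]
  refine ae_of_all _ fun u hu => ?_
  rw [Real.norm_eq_abs, abs_of_nonneg (φ_nonneg u (lt_trans one_pos hu))]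
  exact φ_le_on_Ioi hα hu.le

lemma G_one : G α 1 = 2 ^ (-(2 * α)) := by
  unfold G
  norm_num

lemma integral_φ (hα : 0 < α) :
    ∫ u in Ioi (0:ℝ), φ α u = 2 ^ (1 - 2 * α) / α := by
  have hsplit : Ioi (0:ℝ) = Ioc 0 1 ∪ Ioi 1 := (Ioc_union_Ioi_eq_Ioi zero_le_one).symm
  have hd : Disjoint (Ioc (0:ℝ) 1) (Ioi 1) := Ioc_disjoint_Ioi le_rfl
  have h1 : ∫ u in Ioc (0:ℝ) 1, φ α u = 1 / α * 2 ^ (-(2 * α)) := by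
    rw [← intervalIntegral.integral_of_le zero_le_one]
    have := intervalIntegral.integral_eq_sub_of_hasDerivAt_of_le (f := fun u => 1 / α * G α u)
      (f' := φ α) zero_le_one (continuousOn_const.mul (G_cont hα))
      (fun x hx => ?_) ?_
    · rw [this]
      simp only [G]
      rw [Real.one_rpow, Real.zero_rpow hα.ne']
      norm_num
    · obtain ⟨hx0, hx1⟩ := hx
      have h1x : (0:ℝ) < 1 + x := by linarith
      have := (hasDerivAt_G hα hx0).const_mul (1 / α)
      refine this.congr_deriv (Eq.symm ?_)
      unfold φ
      rw [abs_of_nonpos (by linarith : x - 1 ≤ 0),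
        show (-(2 * α) - 1) = (-(2 * α)) - 1 by ring, Real.rpow_sub_one h1x.ne']
      field_simp
      try ring
    · rw [intervalIntegrable_iff_integrableOn_Ioc_of_le zero_le_one]
      exact φ_integrableOn_Ioc hα
  have h2 : ∫ u in Ioi (1:ℝ), φ α u = 1 / α * 2 ^ (-(2 * α)) := by
    have hG0 : Tendsto (fun u => -(1 / α) * G α u) atTop (𝓝 0) := by
      have hGlim : Tendsto (G α) atTop (𝓝 0) := by
        apply squeeze_zero' (Filter.eventually_atTop.2 ⟨1, fun u hu => ?_⟩)
          (Filter.eventually_atTop.2 ⟨1, fun u hu => ?_⟩) (tendsto_rpow_neg_atTop hα)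
        · have hu0 : (0:ℝ) < u := lt_of_lt_of_le one_pos hu
          unfold G; positivity
        · have hu0 : (0:ℝ) < u := lt_of_lt_of_le one_pos hu
          unfold G
          calc u ^ α * (1 + u) ^ (-(2 * α)) ≤ u ^ α * u ^ (-(2 * α)) :=
              mul_le_mul_of_nonneg_left
                (Real.rpow_le_rpow_of_nonpos hu0 (by linarith) (by linarith)) (by positivity)
            _ = u ^ (-α) := by rw [← Real.rpow_add hu0]; ring_nf
      have := hGlim.const_mul (-(1 / α))
      simpa using this
    have := integral_Ioi_of_hasDerivAt_of_tendsto' (a := 1)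
      (f := fun u => -(1 / α) * G α u) (f' := φ α) (fun x hx => ?_)
      (φ_integrableOn_Ioi hα) hG0
    · rw [this]
      simp only [G]
      rw [Real.one_rpow]
      norm_num
    · have hx1 : (1:ℝ) ≤ x := hx
      have hx0 : (0:ℝ) < x := lt_of_lt_of_le one_pos hx1
      have h1x : (0:ℝ) < 1 + x := by linarith
      have := (hasDerivAt_G hα hx0).const_mul (-(1 / α))
      refine this.congr_deriv (Eq.symm ?_)
      unfold φ
      rw [abs_of_nonneg (by linarith : (0:ℝ) ≤ x - 1),
        show (-(2 * α) - 1) = (-(2 * α)) - 1 by ring, Real.rpow_sub_one h1x.ne']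
      field_simp
      try ring
  rw [hsplit, setIntegral_union hd measurableSet_Ioi (φ_integrableOn_Ioc hα)
    (φ_integrableOn_Ioi hα), h1, h2]
  rw [show (1:ℝ) - 2 * α = 1 + -(2*α) by ring, Real.rpow_add two_pos, Real.rpow_one]
  field_simp
  ring

variable {β : ℝ}

lemma phi_integrableOn (hα : 0 < α) : IntegrableOn (φ α) (Ioi 0) := by
  rw [← Ioc_union_Ioi_eq_Ioi (zero_le_one (α := ℝ))]
  exact (φ_integrableOn_Ioc hα).union (φ_integrableOn_Ioi hα)

lemma lint_withDensity {a r : ℝ} (f : ℝ → ℝ≥0∞) (hf : Measurable f) :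
    ∫⁻ x, f x ∂(gammaMeasure a r) = ∫⁻ x, gammaPDF a r x * f x := by
  rw [gammaMeasure, lintegral_withDensity_eq_lintegral_mul _
    (show Measurable (gammaPDF a r) from (measurable_gammaPDFReal a r).ennreal_ofReal) hf]
  rfl

/-- the key pointwise density identity -/
lemma pdf_identity (hα : 0 < α) (hβ : 0 < β) {x u : ℝ} (hx : 0 < x) (hu : 0 < u) :
    gammaPDFReal α β x * x * (gammaPDFReal α β (x * u) * (|u - 1| / (1 + u)))
      = (Gamma (2 * α) / (Gamma α) ^ 2 * φ α u) * gammaPDFReal (2 * α) (β * (1 + u)) x := by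
  have h1u : (0:ℝ) < 1 + u := by linarith
  have hΓα : Gamma α ≠ 0 := (Gamma_pos_of_pos hα).ne'
  have hΓ2α : Gamma (2 * α) ≠ 0 := (Gamma_pos_of_pos (by linarith)).ne'
  unfold gammaPDFReal φ
  rw [if_pos hx.le, if_pos (mul_nonneg hx.le hu.le), if_pos hx.le]
  have e0 : (x * u) ^ (α - 1) = x ^ (α - 1) * u ^ (α - 1) :=
    Real.mul_rpow hx.le hu.le
  have e1 : x ^ (2 * α - 1) = x ^ (α - 1) * x ^ (α - 1) * x := by
    rw [← Real.rpow_add hx, ← Real.rpow_add_one hx.ne']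
    ring_nf
  have e2 : (β * (1 + u)) ^ (2 * α) = β ^ α * β ^ α * (1 + u) ^ (2 * α) := by
    rw [Real.mul_rpow hβ.le h1u.le, ← Real.rpow_add hβ]
    ring_nf
  have e3 : (1 + u) ^ (-(2 * α)) = ((1 + u) ^ (2 * α))⁻¹ :=
    Real.rpow_neg h1u.le _
  have e4 : exp (-(β * x)) * exp (-(β * (x * u))) = exp (-(β * (1 + u) * x)) := by
    rw [← Real.exp_add]
    ring_nf
  have h2α : ((1 + u) ^ (2 * α)) ≠ 0 := (Real.rpow_pos_of_pos h1u _).ne'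
  rw [e0, e1, e2, e3, ← e4]
  field_simp

lemma lint_main (hα : 0 < α) (hβ : 0 < β) :
    ∫⁻ p : ℝ × ℝ, ENNReal.ofReal (|p.1 - p.2| / (p.1 + p.2))
        ∂((gammaMeasure α β).prod (gammaMeasure α β))
      = ENNReal.ofReal (Gamma (2 * α) / (Gamma α) ^ 2 * (2 ^ (1 - 2 * α) / α)) := by
  haveI : IsProbabilityMeasure (gammaMeasure α β) := isProbabilityMeasure_gammaMeasure hα hβ
  set g : ℝ → ℝ≥0∞ := gammaPDF α β with hg_def
  have hg : Measurable g := (measurable_gammaPDFReal α β).ennreal_ofReal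
  have hgtop : ∀ x, g x ≠ ⊤ := fun x => ENNReal.ofReal_ne_top
  have hF : Measurable (fun p : ℝ × ℝ => ENNReal.ofReal (|p.1 - p.2| / (p.1 + p.2))) :=
    (((measurable_fst.sub measurable_snd).abs).div
      (measurable_fst.add measurable_snd)).ennreal_ofReal
  have hWm : Measurable (fun p : ℝ × ℝ => (g p.1 * ENNReal.ofReal p.1) *
      (g (p.1 * p.2) * ENNReal.ofReal (|p.2 - 1| / (1 + p.2)))) := by
    refine ((hg.comp measurable_fst).mul measurable_fst.ennreal_ofReal).mul
      (((hg.comp (measurable_fst.mul measurable_snd))).mul ?_)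
    exact (((measurable_snd.sub_const 1).abs).div
      ((measurable_const.add measurable_snd))).ennreal_ofReal
  have hD : (0:ℝ) ≤ Gamma (2 * α) / (Gamma α) ^ 2 := by positivity
  calc ∫⁻ p : ℝ × ℝ, ENNReal.ofReal (|p.1 - p.2| / (p.1 + p.2))
        ∂((gammaMeasure α β).prod (gammaMeasure α β))
      = ∫⁻ x, ∫⁻ y, ENNReal.ofReal (|x - y| / (x + y))
          ∂(gammaMeasure α β) ∂(gammaMeasure α β) := lintegral_prod _ hF.aemeasurable
    _ = ∫⁻ x, (∫⁻ y, g y * ENNReal.ofReal (|x - y| / (x + y)) ∂volume)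
          ∂(gammaMeasure α β) := by
        refine lintegral_congr fun x => ?_
        exact lint_withDensity _ ((((measurable_const.sub measurable_id).abs).div
          (measurable_const.add measurable_id)).ennreal_ofReal)
    _ = ∫⁻ x, g x * ∫⁻ y, g y * ENNReal.ofReal (|x - y| / (x + y)) ∂volume ∂volume :=
        lint_withDensity _ (Measurable.lintegral_prod_right'
          ((hg.comp measurable_snd).mul hF))
    _ = ∫⁻ x in Ioi 0, ∫⁻ u in Ioi 0,
          (g x * ENNReal.ofReal x) * (g (x * u) * ENNReal.ofReal (|u - 1| / (1 + u)))
            ∂volume ∂volume := by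
        rw [lint_eq_Ioi (fun x hx => by simp [hg_def, gammaPDF_of_neg hx])]
        refine setLIntegral_congr_fun measurableSet_Ioi (fun x hx => ?_)
        have hx : (0:ℝ) < x := hx
        have hinner_m : Measurable fun y => g y * ENNReal.ofReal (|x - y| / (x + y)) :=
          hg.mul ((((measurable_const.sub measurable_id).abs).div
            (measurable_const.add measurable_id)).ennreal_ofReal)
        rw [lint_eq_Ioi (f := fun y => g y * ENNReal.ofReal (|x - y| / (x + y)))
            (fun y hy => by simp [hg_def, gammaPDF_of_neg hy]),
          lint_scale hx hinner_m]
        rw [setLIntegral_congr_fun (f := fun u => g (x * u) *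
              ENNReal.ofReal (|x - x * u| / (x + x * u)))
            measurableSet_Ioi (fun u hu => ?_),
          ← mul_assoc, ← lintegral_const_mul' _ _
            (ENNReal.mul_ne_top (hgtop x) ENNReal.ofReal_ne_top)]
        have hu : (0:ℝ) < u := hu
        have heq : |x - x * u| / (x + x * u) = |u - 1| / (1 + u) := by
          rw [show x - x * u = x * (1 - u) by ring, show x + x * u = x * (1 + u) by ring,
            abs_mul, abs_of_pos hx, mul_div_mul_left _ _ hx.ne', abs_sub_comm]
        dsimp only
        rw [heq]
    _ = ∫⁻ u in Ioi 0, ∫⁻ x in Ioi 0,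
          (g x * ENNReal.ofReal x) * (g (x * u) * ENNReal.ofReal (|u - 1| / (1 + u)))
            ∂volume ∂volume := by
        exact lintegral_lintegral_swap (hWm.comp
          (measurable_fst.prodMk measurable_snd)).aemeasurable
    _ = ∫⁻ u in Ioi 0, ENNReal.ofReal (Gamma (2 * α) / (Gamma α) ^ 2 * φ α u) ∂volume := by
        refine setLIntegral_congr_fun measurableSet_Ioi (fun u hu => ?_)
        have hu : (0:ℝ) < u := hu
        have h1u : (0:ℝ) < 1 + u := by linarith
        have step : ∀ x ∈ Ioi (0:ℝ),
            (g x * ENNReal.ofReal x) * (g (x * u) * ENNReal.ofReal (|u - 1| / (1 + u)))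
            = ENNReal.ofReal (Gamma (2 * α) / (Gamma α) ^ 2 * φ α u)
                * gammaPDF (2 * α) (β * (1 + u)) x := by
          intro x hx
          have hx : (0:ℝ) < x := hx
          have hnn1 := gammaPDFReal_nonneg hα hβ x
          have hnn2 := gammaPDFReal_nonneg hα hβ (x * u)
          have hc0 : (0:ℝ) ≤ |u - 1| / (1 + u) := by positivity
          rw [hg_def, gammaPDF, gammaPDF,
            ← ENNReal.ofReal_mul hnn1, ← ENNReal.ofReal_mul hnn2,
            ← ENNReal.ofReal_mul (mul_nonneg hnn1 hx.le), pdf_identity hα hβ hx hu,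
            ENNReal.ofReal_mul (mul_nonneg hD (φ_nonneg u hu))]
          rfl
        rw [setLIntegral_congr_fun measurableSet_Ioi step,
          lintegral_const_mul' _ _ ENNReal.ofReal_ne_top,
          lint_gammaPDF_Ioi (by linarith) (by positivity), mul_one]
    _ = ENNReal.ofReal (Gamma (2 * α) / (Gamma α) ^ 2) * ∫⁻ u in Ioi 0,
          ENNReal.ofReal (φ α u) ∂volume := by
        simp_rw [ENNReal.ofReal_mul hD]
        rw [lintegral_const_mul' _ _ ENNReal.ofReal_ne_top]
    _ = ENNReal.ofReal (Gamma (2 * α) / (Gamma α) ^ 2 * (2 ^ (1 - 2 * α) / α)) := by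
        rw [← ofReal_integral_eq_lintegral_ofReal (phi_integrableOn hα)
          ((ae_restrict_iff' measurableSet_Ioi).2 (ae_of_all _ fun u hu => φ_nonneg u hu)),
          integral_φ hα, ← ENNReal.ofReal_mul hD]

end AbsGammaAux


open AbsGammaAux Filter Topology in
/-- For i.i.d. Gamma(α, β) random variables,
`E[|X₁−X₂|/(X₁+X₂)] = (2^{2α−1} · α · B(α,α))⁻¹`. -/
theorem first_abs_moment_gamma {Ω : Type*} [MeasurableSpace Ω] (P : Measure Ω)
    [IsProbabilityMeasure P] (X₁ X₂ : Ω → ℝ) (hX₁ : Measurable X₁) (hX₂ : Measurable X₂)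
    (hindep : IndepFun X₁ X₂ P) (α β : ℝ) (hα : 0 < α) (hβ : 0 < β)
    (hlaw₁ : Measure.map X₁ P = gammaMeasure α β)
    (hlaw₂ : Measure.map X₂ P = gammaMeasure α β) :
    ∫ ω, |X₁ ω - X₂ ω| / (X₁ ω + X₂ ω) ∂P
      = (2 ^ (2 * α - 1) * α * betaFun α α)⁻¹ := by
  haveI : IsProbabilityMeasure (gammaMeasure α β) := isProbabilityMeasure_gammaMeasure hα hβ
  set ν : Measure (ℝ × ℝ) := (gammaMeasure α β).prod (gammaMeasure α β) with hν
  have hFm : Measurable (fun p : ℝ × ℝ => |p.1 - p.2| / (p.1 + p.2)) :=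
    ((measurable_fst.sub measurable_snd).abs).div (measurable_fst.add measurable_snd)
  have hpair : P.map (fun ω => (X₁ ω, X₂ ω)) = ν := by
    rw [hν, (indepFun_iff_map_prod_eq_prod_map_map hX₁.aemeasurable hX₂.aemeasurable).1 hindep,
      hlaw₁, hlaw₂]
  have hstep1 : ∫ ω, |X₁ ω - X₂ ω| / (X₁ ω + X₂ ω) ∂P
      = ∫ p : ℝ × ℝ, |p.1 - p.2| / (p.1 + p.2) ∂ν := by
    rw [← hpair, integral_map (hX₁.prodMk hX₂).aemeasurable hFm.aestronglyMeasurable]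
  have hpos : ∀ᵐ p : ℝ × ℝ ∂ν, 0 < p.1 ∧ 0 < p.2 := by
    have hμIic : gammaMeasure α β (Iic 0) = 0 := by
      rw [gammaMeasure, withDensity_apply _ measurableSet_Iic]
      exact lint_Iic_zero (fun x hx => gammaPDF_of_neg hx)
    have h1 : ν (Iic 0 ×ˢ (univ : Set ℝ)) = 0 := by
      rw [hν, Measure.prod_prod, hμIic, zero_mul]
    have h2 : ν ((univ : Set ℝ) ×ˢ Iic 0) = 0 := by
      rw [hν, Measure.prod_prod, hμIic, mul_zero]
    rw [ae_iff]
    refine measure_mono_null (fun p hp => ?_) (measure_union_null h1 h2)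
    simp only [mem_setOf_eq, not_and_or, not_lt] at hp
    rcases hp with hp | hp
    · exact Or.inl ⟨hp, mem_univ _⟩
    · exact Or.inr ⟨mem_univ _, hp⟩
  have hnn : ∀ᵐ p : ℝ × ℝ ∂ν, 0 ≤ |p.1 - p.2| / (p.1 + p.2) := by
    filter_upwards [hpos] with p hp
    have : (0:ℝ) < p.1 + p.2 := add_pos hp.1 hp.2
    positivity
  have hstep2 : ∫ p : ℝ × ℝ, |p.1 - p.2| / (p.1 + p.2) ∂ν
      = Gamma (2 * α) / (Gamma α) ^ 2 * (2 ^ (1 - 2 * α) / α) := by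
    rw [integral_eq_lintegral_of_nonneg_ae hnn hFm.aestronglyMeasurable, hν,
      lint_main hα hβ, ENNReal.toReal_ofReal (by positivity)]
  rw [hstep1, hstep2]
  -- final algebra
  have hΓα : Gamma α ≠ 0 := (Gamma_pos_of_pos hα).ne'
  have hΓ2α : Gamma (2 * α) ≠ 0 := (Gamma_pos_of_pos (by linarith)).ne'
  have hA : (0:ℝ) < 2 ^ (2 * α - 1) := Real.rpow_pos_of_pos two_pos _
  rw [betaFun, show α + α = 2 * α by ring,
    show (1:ℝ) - 2 * α = -(2 * α - 1) by ring, Real.rpow_neg (by norm_num : (0:ℝ) ≤ 2)]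
  field_simp
end

section
/- If X1, X2 are i.i.d. with a log-concave density f (i.e., f = e^φ with φ concave, twice differentiable) on (0,∞), then E[|X1−X2|/(X1+X2) | X1+X2 > d] ≤ 1/2 for all d>0 with P(X1+X2>d)>0. -/
open MeasureTheory ProbabilityTheory Real Set

noncomputable def Lmap : (ℝ × ℝ) →ₗ[ℝ] (ℝ × ℝ) where
  toFun p := ((p.1 + 3*p.2)/2, (p.1 - p.2)/2)
  map_add' p q := by ext <;> simp <;> ring
  map_smul' c p := by ext <;> simp <;> ring

lemma Lmap_det : LinearMap.det Lmap = -1 := by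
  let b := Module.Basis.finTwoProd ℝ
  rw [← LinearMap.det_toMatrix b, Matrix.det_fin_two]
  simp [LinearMap.toMatrix_apply, Lmap, b]
  norm_num

lemma Lmap_mp : MeasurePreserving (Lmap : ℝ × ℝ → ℝ × ℝ) volume volume := by
  constructor
  · exact Lmap.continuous_of_finiteDimensional.measurable
  · rw [Measure.map_linearMap_addHaar_eq_smul_addHaar _ (by rw [Lmap_det]; norm_num), Lmap_det]
    norm_num


lemma wd_prod (g : ℝ → ENNReal) (hg : Measurable g) [SigmaFinite (volume.withDensity g)] :
    (volume.withDensity g).prod (volume.withDensity g)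
      = (volume : Measure (ℝ × ℝ)).withDensity (fun p => g p.1 * g p.2) := by
  rw [Measure.volume_eq_prod]
  refine Measure.prod_eq fun s t hs ht => ?_
  rw [withDensity_apply _ (hs.prod ht), ← Measure.prod_restrict,
    lintegral_prod_mul hg.aemeasurable hg.aemeasurable,
    withDensity_apply _ hs, withDensity_apply _ ht]

lemma core (g : ℝ → ENNReal) (hg : Measurable g)
    (hg0 : ∀ x : ℝ, x ≤ 0 → g x = 0)
    (hkey : ∀ x y : ℝ, 0 < y → y < x → 3*y ≤ x →
      g x * g y ≤ g ((x + 3*y)/2) * g ((x - y)/2))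
    (d : ℝ) (hd : 0 < d) :
    (∫⁻ p in {p : ℝ × ℝ | d < p.1 + p.2},
        ENNReal.ofReal (|p.1 - p.2| / (p.1 + p.2)) * (g p.1 * g p.2))
      ≤ ENNReal.ofReal (1/2) * ∫⁻ p in {p : ℝ × ℝ | d < p.1 + p.2}, g p.1 * g p.2 := by
  set c : ENNReal := ENNReal.ofReal (1/2) with hc
  set ρ : ℝ × ℝ → ENNReal := fun p => g p.1 * g p.2 with hρ
  set F : ℝ × ℝ → ℝ := fun p => |p.1 - p.2| / (p.1 + p.2) with hF
  set h : ℝ × ℝ → ENNReal := fun p => ENNReal.ofReal (F p) * ρ p with hh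
  have hρm : Measurable ρ := (hg.comp measurable_fst).mul (hg.comp measurable_snd)
  have hFm : Measurable F := ((measurable_fst.sub measurable_snd).abs).div
    (measurable_fst.add measurable_snd)
  have hhm : Measurable h := (ENNReal.measurable_ofReal.comp hFm).mul hρm
  -- sets
  set A : Set (ℝ × ℝ) := {p | d < p.1 + p.2} with hA
  set S : Set (ℝ × ℝ) := {p | 0 < p.1 ∧ 0 < p.2 ∧ d < p.1 + p.2} with hS
  set B₁ : Set (ℝ × ℝ) := {p | 0 < p.1 ∧ 0 < p.2 ∧ d < p.1 + p.2 ∧ p.2 < p.1 ∧ p.1 ≤ 3*p.2} with hB₁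
  set B₂ : Set (ℝ × ℝ) := {p | 0 < p.1 ∧ 0 < p.2 ∧ d < p.1 + p.2 ∧ 3*p.2 < p.1} with hB₂
  set B : Set (ℝ × ℝ) := {p | 0 < p.1 ∧ 0 < p.2 ∧ d < p.1 + p.2 ∧ p.2 < p.1} with hB
  set B' : Set (ℝ × ℝ) := {p | 0 < p.1 ∧ 0 < p.2 ∧ d < p.1 + p.2 ∧ p.1 < p.2} with hB'
  set Δ : Set (ℝ × ℝ) := {p | 0 < p.1 ∧ 0 < p.2 ∧ d < p.1 + p.2 ∧ p.1 = p.2} with hΔ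
  have m1 : Measurable (fun p : ℝ × ℝ => p.1) := measurable_fst
  have m2 : Measurable (fun p : ℝ × ℝ => p.2) := measurable_snd
  have hAm : MeasurableSet A := measurableSet_lt measurable_const (m1.add m2)
  have hSm : MeasurableSet S :=
    (measurableSet_lt measurable_const m1).inter ((measurableSet_lt measurable_const m2).inter hAm)
  have hB₁m : MeasurableSet B₁ :=
    (measurableSet_lt measurable_const m1).inter ((measurableSet_lt measurable_const m2).inter
      ((measurableSet_lt measurable_const (m1.add m2)).inter ((measurableSet_lt m2 m1).inter
        (measurableSet_le m1 (m2.const_mul 3)))))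
  have hB₂m : MeasurableSet B₂ :=
    (measurableSet_lt measurable_const m1).inter ((measurableSet_lt measurable_const m2).inter
      ((measurableSet_lt measurable_const (m1.add m2)).inter (measurableSet_lt (m2.const_mul 3) m1)))
  have hBm : MeasurableSet B :=
    (measurableSet_lt measurable_const m1).inter ((measurableSet_lt measurable_const m2).inter
      ((measurableSet_lt measurable_const (m1.add m2)).inter (measurableSet_lt m2 m1)))
  have hB'm : MeasurableSet B' :=
    (measurableSet_lt measurable_const m1).inter ((measurableSet_lt measurable_const m2).inter
      ((measurableSet_lt measurable_const (m1.add m2)).inter (measurableSet_lt m1 m2)))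
  have hΔm : MeasurableSet Δ :=
    (measurableSet_lt measurable_const m1).inter ((measurableSet_lt measurable_const m2).inter
      ((measurableSet_lt measurable_const (m1.add m2)).inter (measurableSet_eq_fun m1 m2)))
  have hSA : S ⊆ A := fun p hp => hp.2.2
  -- reduction from A to S for functions vanishing off positives
  have reduce : ∀ f : ℝ × ℝ → ENNReal, (∀ p : ℝ × ℝ, p.1 ≤ 0 ∨ p.2 ≤ 0 → f p = 0) →
      (∫⁻ p in A, f p) = ∫⁻ p in S, f p := by
    intro f hf
    have h1 : (∫⁻ p in A, f p) = ∫⁻ p in A, S.indicator f p := by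
      refine setLIntegral_congr_fun hAm (fun p hp => ?_)
      by_cases h1 : 0 < p.1
      · by_cases h2 : 0 < p.2
        · rw [indicator_of_mem (show p ∈ S by rw [hS]; exact ⟨h1, h2, hp⟩)]
        · simp [indicator_apply, hf p (Or.inr (not_lt.1 h2))]
      · simp [indicator_apply, hf p (Or.inl (not_lt.1 h1))]
    rw [h1, ← lintegral_indicator hAm, Set.indicator_indicator,
      inter_eq_self_of_subset_right hSA, lintegral_indicator hSm]
  have hρ0 : ∀ p : ℝ × ℝ, p.1 ≤ 0 ∨ p.2 ≤ 0 → ρ p = 0 := by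
    rintro p (hp | hp) <;> simp [hρ, hg0 _ hp]
  have hh0 : ∀ p : ℝ × ℝ, p.1 ≤ 0 ∨ p.2 ≤ 0 → h p = 0 := by
    intro p hp; simp [hh, hρ0 p hp]
  -- decomposition of S
  have hSdec : S = B ∪ B' ∪ Δ := by
    ext p
    simp only [hS, hB, hB', hΔ, mem_setOf_eq, mem_union]
    constructor
    · rintro ⟨h1, h2, h3⟩
      rcases lt_trichotomy p.1 p.2 with h | h | h
      · exact Or.inl (Or.inr ⟨h1, h2, h3, h⟩)
      · exact Or.inr ⟨h1, h2, h3, h⟩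
      · exact Or.inl (Or.inl ⟨h1, h2, h3, h⟩)
    · rintro ((⟨h1, h2, h3, _⟩ | ⟨h1, h2, h3, _⟩) | ⟨h1, h2, h3, _⟩) <;> exact ⟨h1, h2, h3⟩
  have hBdec : B = B₁ ∪ B₂ := by
    ext p
    simp only [hB, hB₁, hB₂, mem_setOf_eq, mem_union]
    constructor
    · rintro ⟨h1, h2, h3, h4⟩
      rcases le_or_gt p.1 (3 * p.2) with h | h
      · exact Or.inl ⟨h1, h2, h3, h4, h⟩
      · exact Or.inr ⟨h1, h2, h3, h⟩
    · rintro (⟨h1, h2, h3, h4, _⟩ | ⟨h1, h2, h3, h4⟩)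
      · exact ⟨h1, h2, h3, h4⟩
      · exact ⟨h1, h2, h3, by linarith⟩
  have hdisj1 : Disjoint (B ∪ B') Δ := by
    rw [Set.disjoint_left]
    rintro p (hp | hp) hpΔ
    · exact absurd hpΔ.2.2.2 (ne_of_gt hp.2.2.2)
    · exact absurd hpΔ.2.2.2 (ne_of_lt hp.2.2.2)
  have hdisj2 : Disjoint B B' := by
    rw [Set.disjoint_left]
    rintro p hp hp'
    exact absurd hp.2.2.2 (not_lt.2 hp'.2.2.2.le)
  have hdisj3 : Disjoint B₁ B₂ := by
    rw [Set.disjoint_left]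
    rintro p hp hp'
    exact absurd hp.2.2.2.2 (not_le.2 hp'.2.2.2)
  have splitS : ∀ f : ℝ × ℝ → ENNReal,
      (∫⁻ p in S, f p) = (∫⁻ p in B, f p) + (∫⁻ p in B', f p) + ∫⁻ p in Δ, f p := by
    intro f
    rw [hSdec, lintegral_union hΔm hdisj1, lintegral_union hB'm hdisj2]
  have splitB : ∀ f : ℝ × ℝ → ENNReal,
      (∫⁻ p in B, f p) = (∫⁻ p in B₁, f p) + ∫⁻ p in B₂, f p := by
    intro f
    rw [hBdec, lintegral_union hB₂m hdisj3]
  -- swap symmetry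
  have swap_mp : MeasurePreserving Prod.swap (volume : Measure (ℝ × ℝ)) volume := by
    rw [Measure.volume_eq_prod]
    exact Measure.measurePreserving_swap
  have swap_eq : ∀ f : ℝ × ℝ → ENNReal, Measurable f → (∀ p : ℝ × ℝ, f p.swap = f p) →
      (∫⁻ p in B', f p) = ∫⁻ p in B, f p := by
    intro f hf hsymm
    rw [← lintegral_indicator hBm, ← lintegral_indicator hB'm,
      ← swap_mp.lintegral_comp (hf.indicator hBm)]
    congr 1
    funext p
    have hiff : (Prod.swap p ∈ B) ↔ p ∈ B' := by
      simp only [hB, hB', Prod.swap, mem_setOf_eq]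
      constructor <;> rintro ⟨a, b, cc, e⟩ <;> exact ⟨b, a, by linarith, e⟩
    simp only [indicator_apply]
    rw [hsymm p]
    exact if_congr hiff.symm rfl rfl
  have hρsymm : ∀ p : ℝ × ℝ, ρ p.swap = ρ p := fun p => mul_comm _ _
  have hhsymm : ∀ p : ℝ × ℝ, h p.swap = h p := by
    intro p
    simp only [hh, hF, Prod.fst_swap, Prod.snd_swap]
    rw [abs_sub_comm, add_comm p.2 p.1, hρsymm p]
  -- Δ contributes zero to h
  have hΔ0 : (∫⁻ p in Δ, h p) = 0 := by
    have : ∀ p ∈ Δ, h p = (0 : ENNReal) := by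
      rintro p ⟨_, _, _, he⟩
      simp [hh, hF, he]
    rw [setLIntegral_congr_fun hΔm this]
    simp
  -- pointwise identities on B₁ and B₂
  set D : ℝ × ℝ → ENNReal := fun p => ENNReal.ofReal (1/2 - F p) * ρ p with hD
  set E : ℝ × ℝ → ENNReal := fun p => ENNReal.ofReal (F p - 1/2) * ρ p with hE
  have hDm : Measurable D := (ENNReal.measurable_ofReal.comp (measurable_const.sub hFm)).mul hρm
  have hEm : Measurable E := (ENNReal.measurable_ofReal.comp (hFm.sub measurable_const)).mul hρm
  have eqB₁ : (∫⁻ p in B₁, c * ρ p) = (∫⁻ p in B₁, h p) + ∫⁻ p in B₁, D p := by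
    have hpt : ∀ p ∈ B₁, c * ρ p = h p + D p := by
      rintro p ⟨hx, hy, hs, hyx, hx3⟩
      have hspos : 0 < p.1 + p.2 := by linarith
      have hF0 : 0 ≤ F p := div_nonneg (abs_nonneg _) hspos.le
      have hFle : F p ≤ 1/2 := by
        simp only [hF]
        rw [abs_of_pos (by linarith : (0:ℝ) < p.1 - p.2), div_le_iff₀ hspos]
        linarith
      have hsum : ENNReal.ofReal (F p) + ENNReal.ofReal (1/2 - F p) = c := by
        rw [← ENNReal.ofReal_add hF0 (by linarith)]
        norm_num [hc]
      rw [hh, hD, ← hsum, add_mul]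
    rw [setLIntegral_congr_fun hB₁m hpt, lintegral_add_left hhm]
  have eqB₂ : (∫⁻ p in B₂, h p) = (∫⁻ p in B₂, c * ρ p) + ∫⁻ p in B₂, E p := by
    have hpt : ∀ p ∈ B₂, h p = c * ρ p + E p := by
      rintro p ⟨hx, hy, hs, h3⟩
      have hspos : 0 < p.1 + p.2 := by linarith
      have hFge : 1/2 ≤ F p := by
        simp only [hF]
        rw [abs_of_pos (by linarith : (0:ℝ) < p.1 - p.2), le_div_iff₀ hspos]
        linarith
      have hsum : c + ENNReal.ofReal (F p - 1/2) = ENNReal.ofReal (F p) := by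
        rw [hc, ← ENNReal.ofReal_add (by norm_num) (by linarith)]
        norm_num
      show ENNReal.ofReal (F p) * ρ p = c * ρ p + ENNReal.ofReal (F p - 1/2) * ρ p
      rw [← hsum, add_mul]
    rw [setLIntegral_congr_fun hB₂m hpt,
      lintegral_add_left ((show Measurable fun p => c * ρ p from measurable_const.mul hρm))]
  -- the key transport inequality
  set K : ℝ × ℝ → ENNReal := B₁.indicator D with hK
  have hKm : Measurable K := hDm.indicator hB₁m
  have key : (∫⁻ p in B₂, E p) ≤ ∫⁻ p in B₁, D p := by
    have step1 : ∀ p ∈ B₂, E p ≤ K (Lmap p) := by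
      rintro p ⟨hx, hy, hs, h3⟩
      have hyx : p.2 < p.1 := by linarith
      have hspos : 0 < p.1 + p.2 := by linarith
      have hLp : (Lmap p : ℝ × ℝ) = ((p.1 + 3*p.2)/2, (p.1 - p.2)/2) := rfl
      have hmem : ((p.1 + 3*p.2)/2, (p.1 - p.2)/2) ∈ B₁ := by
        refine ⟨by linarith, by linarith, by simp only; linarith, by simp only; linarith,
          by simp only; linarith⟩
      have hFLp : F ((p.1 + 3*p.2)/2, (p.1 - p.2)/2) = 2*p.2/(p.1+p.2) := by
        simp only [hF]
        rw [show (p.1 + 3*p.2)/2 - (p.1 - p.2)/2 = 2*p.2 by ring,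
          show (p.1 + 3*p.2)/2 + (p.1 - p.2)/2 = p.1 + p.2 by ring,
          abs_of_pos (by linarith : (0:ℝ) < 2*p.2)]
      have heq : 1/2 - 2*p.2/(p.1+p.2) = F p - 1/2 := by
        simp only [hF]
        rw [abs_of_pos (by linarith : (0:ℝ) < p.1 - p.2)]
        field_simp
        ring
      rw [hLp, hK, indicator_of_mem hmem]
      show ENNReal.ofReal (F p - 1/2) * (g p.1 * g p.2)
        ≤ ENNReal.ofReal (1/2 - F ((p.1 + 3*p.2)/2, (p.1 - p.2)/2))
            * (g ((p.1 + 3*p.2)/2) * g ((p.1 - p.2)/2))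
      rw [hFLp, heq]
      exact mul_le_mul_right (hkey p.1 p.2 hy hyx h3.le) _
    calc (∫⁻ p in B₂, E p) ≤ ∫⁻ p in B₂, K (Lmap p) :=
          setLIntegral_mono (hKm.comp Lmap_mp.measurable) step1
      _ ≤ ∫⁻ p, K (Lmap p) := setLIntegral_le_lintegral _ _
      _ = ∫⁻ p, K p := Lmap_mp.lintegral_comp hKm
      _ = ∫⁻ p in B₁, D p := lintegral_indicator hB₁m _
  -- putting everything together
  have mainB : (∫⁻ p in B, h p) ≤ c * ∫⁻ p in B, ρ p := by
    have hc1 : (∫⁻ p in B₁, c * ρ p) = c * ∫⁻ p in B₁, ρ p := lintegral_const_mul c hρm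
    have hc2 : (∫⁻ p in B₂, c * ρ p) = c * ∫⁻ p in B₂, ρ p := lintegral_const_mul c hρm
    calc (∫⁻ p in B, h p) = (∫⁻ p in B₁, h p) + ∫⁻ p in B₂, h p := splitB h
      _ = (∫⁻ p in B₁, h p) + ((∫⁻ p in B₂, c * ρ p) + ∫⁻ p in B₂, E p) := by rw [eqB₂]
      _ ≤ (∫⁻ p in B₁, h p) + ((∫⁻ p in B₂, c * ρ p) + ∫⁻ p in B₁, D p) := by
          gcongr
      _ = ((∫⁻ p in B₁, h p) + ∫⁻ p in B₁, D p) + ∫⁻ p in B₂, c * ρ p := by ring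
      _ = (∫⁻ p in B₁, c * ρ p) + ∫⁻ p in B₂, c * ρ p := by rw [eqB₁]
      _ = c * ((∫⁻ p in B₁, ρ p) + ∫⁻ p in B₂, ρ p) := by rw [hc1, hc2, mul_add]
      _ = c * ∫⁻ p in B, ρ p := by rw [← splitB ρ]
  show (∫⁻ p in A, h p) ≤ c * ∫⁻ p in A, ρ p
  calc (∫⁻ p in A, h p) = ∫⁻ p in S, h p := reduce h hh0
    _ = (∫⁻ p in B, h p) + (∫⁻ p in B', h p) + ∫⁻ p in Δ, h p := splitS h
    _ = (∫⁻ p in B, h p) + (∫⁻ p in B, h p) + 0 := by rw [swap_eq h hhm hhsymm, hΔ0]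
    _ ≤ (c * ∫⁻ p in B, ρ p) + (c * ∫⁻ p in B, ρ p) + c * ∫⁻ p in Δ, ρ p := by
        exact add_le_add (add_le_add mainB mainB) zero_le
    _ = c * ((∫⁻ p in B, ρ p) + (∫⁻ p in B', ρ p) + ∫⁻ p in Δ, ρ p) := by
        rw [swap_eq ρ hρm hρsymm]; ring
    _ = c * ∫⁻ p in S, ρ p := by rw [← splitS ρ]
    _ = c * ∫⁻ p in A, ρ p := by rw [reduce ρ hρ0]

/-- For i.i.d. random variables with a log-concave, twice differentiable density on `(0,∞)`,
`E[|X₁−X₂|/(X₁+X₂) | X₁+X₂ > d] ≤ 1/2` for every `d > 0` with positive probability. -/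
theorem g_le_half_of_logConcave {Ω : Type*} [MeasurableSpace Ω] (P : Measure Ω)
    [IsProbabilityMeasure P] (X₁ X₂ : Ω → ℝ) (hX₁ : Measurable X₁) (hX₂ : Measurable X₂)
    (hindep : IndepFun X₁ X₂ P) (φ : ℝ → ℝ)
    (hconc : ConcaveOn ℝ (Set.Ioi (0:ℝ)) φ)
    (hdiff : ∀ x ∈ Set.Ioi (0:ℝ), ContDiffAt ℝ 2 φ x)
    (hlaw₁ : Measure.map X₁ P
      = volume.withDensity (fun x => ENNReal.ofReal (if 0 < x then Real.exp (φ x) else 0)))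
    (hlaw₂ : Measure.map X₂ P
      = volume.withDensity (fun x => ENNReal.ofReal (if 0 < x then Real.exp (φ x) else 0)))
    (d : ℝ) (hd : 0 < d) (hP : 0 < P {ω | X₁ ω + X₂ ω > d}) :
    (∫ ω in {ω | X₁ ω + X₂ ω > d}, |X₁ ω - X₂ ω| / (X₁ ω + X₂ ω) ∂P)
      / (P {ω | X₁ ω + X₂ ω > d}).toReal ≤ 1 / 2 := by
  set g : ℝ → ENNReal := fun x => ENNReal.ofReal (if 0 < x then Real.exp (φ x) else 0) with hgdef
  -- measurability of g
  have hcont : ContinuousOn (fun x => Real.exp (φ x)) (Set.Ioi (0:ℝ)) := by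
    intro x hx
    exact ((Real.continuous_exp.continuousAt.comp (hdiff x hx).continuousAt)).continuousWithinAt
  have hpw : (fun x => if 0 < x then Real.exp (φ x) else 0)
      = (Set.Ioi (0:ℝ)).piecewise (fun x => Real.exp (φ x)) (fun _ => 0) := by
    funext x
    by_cases hx : 0 < x <;> simp [Set.piecewise, hx]
  have hinner : Measurable (fun x => if 0 < x then Real.exp (φ x) else 0) := by
    rw [hpw]
    exact hcont.measurable_piecewise continuousOn_const measurableSet_Ioi
  have hgm : Measurable g := ENNReal.measurable_ofReal.comp hinner
  have hg0 : ∀ x : ℝ, x ≤ 0 → g x = 0 := by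
    intro x hx
    simp [hgdef, not_lt.2 hx]
  -- key concavity inequality
  have hkey : ∀ x y : ℝ, 0 < y → y < x → 3*y ≤ x →
      g x * g y ≤ g ((x + 3*y)/2) * g ((x - y)/2) := by
    intro x y hy hyx h3
    have hx : 0 < x := by linarith
    have hx' : 0 < (x + 3*y)/2 := by linarith
    have hy' : 0 < (x - y)/2 := by linarith
    have hxy : (0:ℝ) < x - y := by linarith
    set a : ℝ := (x + y)/(2*(x - y)) with hadef
    have ha0 : 0 ≤ a := div_nonneg (by linarith) (by linarith)
    have ha1 : a ≤ 1 := by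
      rw [hadef, div_le_one (by linarith)]
      linarith
    have e1 : a * x + (1 - a) * y = (x + 3*y)/2 := by
      rw [hadef]; field_simp; ring
    have e2 : (1 - a) * x + a * y = (x - y)/2 := by
      rw [hadef]; field_simp; ring
    have c1 := hconc.2 (Set.mem_Ioi.2 hx) (Set.mem_Ioi.2 hy) ha0
      (by linarith : (0:ℝ) ≤ 1 - a) (by ring)
    have c2 := hconc.2 (Set.mem_Ioi.2 hx) (Set.mem_Ioi.2 hy)
      (by linarith : (0:ℝ) ≤ 1 - a) ha0 (by ring)
    simp only [smul_eq_mul] at c1 c2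
    rw [e1] at c1
    rw [e2] at c2
    have hsum : φ x + φ y ≤ φ ((x + 3*y)/2) + φ ((x - y)/2) := by linarith
    simp only [hgdef]
    rw [if_pos hx, if_pos hy, if_pos hx', if_pos hy',
      ← ENNReal.ofReal_mul (Real.exp_nonneg _), ← ENNReal.ofReal_mul (Real.exp_nonneg _),
      ← Real.exp_add, ← Real.exp_add]
    exact ENNReal.ofReal_le_ofReal (Real.exp_le_exp.2 hsum)
  -- measures
  haveI hμP : IsProbabilityMeasure (volume.withDensity g) := by
    rw [← hlaw₁]
    exact Measure.isProbabilityMeasure_map hX₁.aemeasurable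
  set ν : Measure (ℝ × ℝ) := (volume.withDensity g).prod (volume.withDensity g) with hνdef
  haveI : IsProbabilityMeasure ν := by rw [hνdef]; infer_instance
  have hν : ν = (volume : Measure (ℝ × ℝ)).withDensity (fun p => g p.1 * g p.2) := wd_prod g hgm
  have hpair : Measure.map (fun ω => (X₁ ω, X₂ ω)) P = ν := by
    rw [(ProbabilityTheory.indepFun_iff_map_prod_eq_prod_map_map hX₁.aemeasurable
      hX₂.aemeasurable).1 hindep, hlaw₁, hlaw₂]
  set A : Set (ℝ × ℝ) := {p | d < p.1 + p.2} with hAdef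
  have hAm : MeasurableSet A :=
    measurableSet_lt measurable_const (measurable_fst.add measurable_snd)
  have hpre : {ω | X₁ ω + X₂ ω > d} = (fun ω => (X₁ ω, X₂ ω)) ⁻¹' A := rfl
  have hPA : P {ω | X₁ ω + X₂ ω > d} = ν A := by
    rw [← hpair, Measure.map_apply (hX₁.prodMk hX₂) hAm, hpre]
  set F : ℝ × ℝ → ℝ := fun p => |p.1 - p.2| / (p.1 + p.2) with hFdef
  have hFm : Measurable F :=
    ((measurable_fst.sub measurable_snd).abs).div (measurable_fst.add measurable_snd)
  have hnum : (∫ ω in {ω | X₁ ω + X₂ ω > d}, |X₁ ω - X₂ ω| / (X₁ ω + X₂ ω) ∂P)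
      = ∫ p in A, F p ∂ν := by
    rw [hpre, ← hpair,
      setIntegral_map hAm hFm.aestronglyMeasurable (hX₁.prodMk hX₂).aemeasurable]
  rw [hnum, hPA]
  have hνA_pos : 0 < ν A := by rw [← hPA]; exact hP
  have hνA_ne : ν A ≠ ⊤ := measure_ne_top ν A
  have htR : 0 < (ν A).toReal := ENNReal.toReal_pos hνA_pos.ne' hνA_ne
  rw [div_le_iff₀ htR]
  have hnn : 0 ≤ᵐ[ν.restrict A] F := by
    filter_upwards [ae_restrict_mem hAm] with p hp
    exact div_nonneg (abs_nonneg _) (le_of_lt (lt_trans hd hp))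
  rw [integral_eq_lintegral_of_nonneg_ae hnn hFm.aestronglyMeasurable.restrict]
  have hlin : (∫⁻ p in A, ENNReal.ofReal (F p) ∂ν) ≤ ENNReal.ofReal (1/2) * ν A := by
    have h1 : (∫⁻ p in A, ENNReal.ofReal (F p) ∂ν)
        = ∫⁻ p in A, ENNReal.ofReal (F p) * (g p.1 * g p.2) ∂volume := by
      rw [hν, setLIntegral_withDensity_eq_setLIntegral_mul _
        (show Measurable fun p : ℝ × ℝ => g p.1 * g p.2 from
          (hgm.comp measurable_fst).mul (hgm.comp measurable_snd))
        (show Measurable fun p : ℝ × ℝ => ENNReal.ofReal (F p) from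
          ENNReal.measurable_ofReal.comp hFm) hAm]
      exact setLIntegral_congr_fun hAm (fun p _ => by simp [Pi.mul_apply, mul_comm])
    have h2 : (∫⁻ p in A, (g p.1 * g p.2) ∂volume) = ν A := by
      rw [hν, withDensity_apply _ hAm]
    rw [h1, ← h2]
    exact core g hgm hg0 hkey d hd
  calc (∫⁻ p in A, ENNReal.ofReal (F p) ∂ν).toReal
      ≤ (ENNReal.ofReal (1/2) * ν A).toReal :=
        ENNReal.toReal_mono (ENNReal.mul_ne_top ENNReal.ofReal_ne_top hνA_ne) hlin
    _ = 1/2 * (ν A).toReal := by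
        rw [ENNReal.toReal_mul, ENNReal.toReal_ofReal (by norm_num)]
end

section
/- If X1, X2 are i.i.d. with a log-convex density f on (0,∞), then E[|X1−X2|/(X1+X2) | X1+X2 > d] ≥ 1/2 for all d>0 with P(X1+X2>d)>0. -/
open MeasureTheory ProbabilityTheory Real Set
open scoped ENNReal NNReal

set_option maxHeartbeats 1000000

lemma convex_pair_mono {φ : ℝ → ℝ} (hconv : ConvexOn ℝ (Set.Ioi (0:ℝ)) φ) {s a b : ℝ}
    (hs : 0 < s) (ha : s/2 ≤ a) (hab : a ≤ b) (hb : b < s) :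
    φ a + φ (s - a) ≤ φ b + φ (s - b) := by
  rcases eq_or_lt_of_le hab with rfl | hab'
  · exact le_refl _
  · have hb2 : s/2 < b := lt_of_le_of_lt ha hab'
    have hden : 0 < 2*b - s := by linarith
    set t : ℝ := (a - (s - b)) / (2*b - s) with ht
    have ht0 : 0 ≤ t := div_nonneg (by linarith) hden.le
    have ht1 : t ≤ 1 := by rw [ht, div_le_one hden]; linarith
    have hbpos : (0:ℝ) < b := by linarith
    have hsb : (0:ℝ) < s - b := by linarith
    have key1 : t • b + (1 - t) • (s - b) = a := by
      have e : t * (2*b - s) = a - (s - b) := by rw [ht]; exact div_mul_cancel₀ _ hden.ne'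
      simp only [smul_eq_mul]; linear_combination e
    have key2 : (1 - t) • b + t • (s - b) = s - a := by
      have e : t * (2*b - s) = a - (s - b) := by rw [ht]; exact div_mul_cancel₀ _ hden.ne'
      simp only [smul_eq_mul]; linear_combination (-1:ℝ) * e
    have h1 := hconv.2 (mem_Ioi.mpr hbpos) (mem_Ioi.mpr hsb) ht0
      (show (0:ℝ) ≤ 1 - t by linarith) (show t + (1 - t) = 1 by ring)
    have h2 := hconv.2 (mem_Ioi.mpr hbpos) (mem_Ioi.mpr hsb)
      (show (0:ℝ) ≤ 1 - t by linarith) ht0 (show (1 - t) + t = 1 by ring)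
    rw [key1] at h1
    rw [key2] at h2
    simp only [smul_eq_mul] at h1 h2
    linarith

lemma slice_nonneg (f : ℝ → ℝ) (hf0 : ∀ x, 0 ≤ f x)
    (hsupp : ∀ x, x ≤ 0 → f x = 0) {s : ℝ} (hs : 0 < s)
    (hmono : ∀ a b, s/2 ≤ a → a ≤ b → b < s → f a * f (s - a) ≤ f b * f (s - b))
    (hint : Integrable (fun y => (|2*y - s|/s - 1/2) * (f y * f (s - y)))) :
    0 ≤ ∫ y, (|2*y - s|/s - 1/2) * (f y * f (s - y)) := by
  set W : ℝ → ℝ := fun y => (|2*y - s|/s - 1/2) * (f y * f (s - y)) with hW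
  have hWsym : ∀ y, W (s - y) = W y := by
    intro y
    simp only [hW]
    rw [show 2*(s - y) - s = -(2*y - s) by ring, abs_neg, sub_sub_cancel,
      mul_comm (f (s - y))]
  have hrefl : ∫ y in Iio (s/2), W y = ∫ y in Ioi (s/2), W y := by
    rw [← integral_indicator measurableSet_Iio, ← integral_indicator measurableSet_Ioi]
    have : ∀ y, (Iio (s/2)).indicator W (s - y) = (Ioi (s/2)).indicator W y := by
      intro y
      by_cases hy : s/2 < y
      · rw [indicator_of_mem (Set.mem_Iio.mpr (by linarith)), indicator_of_mem
          (Set.mem_Ioi.mpr hy), hWsym]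
      · rw [indicator_of_notMem (fun h => hy (by simp only [Set.mem_Iio] at h; linarith)),
          indicator_of_notMem (fun h => hy (Set.mem_Ioi.mp h))]
    calc ∫ y, (Iio (s/2)).indicator W y
        = ∫ y, (Iio (s/2)).indicator W (s + y) := (integral_add_left_eq_self _ s).symm
      _ = ∫ y, (Iio (s/2)).indicator W (s + (-y)) := (integral_neg_eq_self _ _).symm
      _ = ∫ y, (Ioi (s/2)).indicator W y := by
          refine integral_congr_ae (Filter.Eventually.of_forall fun y => ?_)
          show (Iio (s/2)).indicator W (s + (-y)) = (Ioi (s/2)).indicator W y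
          rw [show s + (-y) = s - y by ring, this]
  have hsplit : ∫ y, W y = 2 * ∫ y in Ioi (s/2), W y := by
    have h1 := integral_add_compl (measurableSet_Iio (a := s/2)) hint
    rw [compl_Iio, hrefl, integral_Ici_eq_integral_Ioi] at h1
    linarith
  rw [hsplit]
  have hIoo : ∫ y in Ioi (s/2), W y = ∫ y in Ioo (s/2) s, W y := by
    refine (setIntegral_eq_of_subset_of_ae_diff_eq_zero (μ := volume) (f := W)
      (t := Ioi (s/2)) (s := Ioo (s/2) s) measurableSet_Ioi.nullMeasurableSet
      (fun y hy => hy.1) (Filter.Eventually.of_forall fun y hy => ?_))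
    have hys : s ≤ y := by
      by_contra hlt
      exact hy.2 ⟨hy.1, lt_of_not_ge hlt⟩
    simp only [hW, hsupp (s - y) (by linarith), mul_zero]
  rw [hIoo]
  set w : ℝ → ℝ := fun y => (2*y - s)/s - 1/2 with hwdef
  set g : ℝ → ℝ := fun y => f y * f (s - y) with hg
  set g₀ : ℝ := f (3*s/4) * f (s - 3*s/4) with hg0
  have hWg : ∀ y ∈ Ioo (s/2) s, W y = w y * (g y - g₀) + w y * g₀ := by
    intro y hy
    have h2 : 0 ≤ 2*y - s := by have := hy.1; linarith
    simp only [hW, hwdef, hg, abs_of_nonneg h2]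
    ring
  have hWint : IntegrableOn W (Ioo (s/2) s) := hint.integrableOn
  have hwcont : Continuous w := by fun_prop
  have hwint : IntegrableOn w (Ioo (s/2) s) :=
    (hwcont.integrableOn_Icc).mono_set Ioo_subset_Icc_self
  have hwg0int : IntegrableOn (fun y => w y * g₀) (Ioo (s/2) s) := hwint.mul_const _
  have hwgint : IntegrableOn (fun y => w y * (g y - g₀)) (Ioo (s/2) s) := by
    have : IntegrableOn (fun y => W y - w y * g₀) (Ioo (s/2) s) := hWint.sub hwg0int
    refine this.congr_fun (fun y hy => ?_) measurableSet_Ioo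
    beta_reduce; rw [hWg y hy]; ring
  have hsum : ∫ y in Ioo (s/2) s, W y
      = (∫ y in Ioo (s/2) s, w y * (g y - g₀)) + ∫ y in Ioo (s/2) s, w y * g₀ := by
    rw [← integral_add hwgint hwg0int]
    exact setIntegral_congr_fun measurableSet_Ioo hWg
  have hwzero : ∫ y in Ioo (s/2) s, w y = 0 := by
    rw [← integral_Ioc_eq_integral_Ioo, ← intervalIntegral.integral_of_le (by linarith : s/2 ≤ s)]
    have : ∀ y, w y = (2/s) * y - 3/2 := by
      intro y; simp only [hwdef]; field_simp; ring
    simp_rw [this]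
    rw [intervalIntegral.integral_sub ((intervalIntegral.intervalIntegrable_id).const_mul _)
      (intervalIntegrable_const), intervalIntegral.integral_const_mul,
      integral_id, intervalIntegral.integral_const, smul_eq_mul]
    field_simp
    ring
  have hpt : ∀ y ∈ Ioo (s/2) s, 0 ≤ w y * (g y - g₀) := by
    intro y hy
    obtain ⟨hy1, hy2⟩ := hy
    rcases le_total y (3*s/4) with hle | hge
    · have hw : w y ≤ 0 := by
        simp only [hwdef, sub_nonpos]
        rw [div_le_iff₀ hs]; linarith
      have hgle : g y ≤ g₀ := hmono y (3*s/4) hy1.le hle (by linarith)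
      have := mul_nonneg (neg_nonneg.mpr hw) (neg_nonneg.mpr (by linarith : g y - g₀ ≤ 0))
      rwa [neg_mul_neg] at this
    · have hw : 0 ≤ w y := by
        simp only [hwdef, sub_nonneg]
        rw [le_div_iff₀ hs]; linarith
      have hgle : g₀ ≤ g y := hmono (3*s/4) y (by linarith) hge hy2
      exact mul_nonneg hw (by linarith)
  have hconst : ∫ y in Ioo (s/2) s, w y * g₀ = (∫ y in Ioo (s/2) s, w y) * g₀ :=
    integral_mul_const g₀ w
  have h1 : 0 ≤ ∫ y in Ioo (s/2) s, w y * (g y - g₀) :=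
    setIntegral_nonneg measurableSet_Ioo hpt
  rw [hsum, hconst, hwzero]
  linarith

lemma meas_density {φ : ℝ → ℝ} (hconv : ConvexOn ℝ (Set.Ioi (0:ℝ)) φ) :
    Measurable (fun x => if 0 < x then Real.exp (φ x) else 0) := by
  have hc : ContinuousOn (fun x => Real.exp (φ x)) (Ioi (0:ℝ)) :=
    Real.continuous_exp.comp_continuousOn (hconv.continuousOn isOpen_Ioi)
  have := hc.measurable_piecewise (g := fun _ => (0:ℝ)) continuousOn_const measurableSet_Ioi
  convert this using 1
  funext x; simp [Set.piecewise]

/-- For i.i.d. random variables with a log-convex density on `(0,∞)`,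
`E[|X₁−X₂|/(X₁+X₂) | X₁+X₂ > d] ≥ 1/2` for every `d > 0` with positive probability. -/
theorem g_ge_half_of_logConvex {Ω : Type*} [MeasurableSpace Ω] (P : Measure Ω)
    [IsProbabilityMeasure P] (X₁ X₂ : Ω → ℝ) (hX₁ : Measurable X₁) (hX₂ : Measurable X₂)
    (hindep : IndepFun X₁ X₂ P) (φ : ℝ → ℝ)
    (hconv : ConvexOn ℝ (Set.Ioi (0:ℝ)) φ)
    (hlaw₁ : Measure.map X₁ P
      = volume.withDensity (fun x => ENNReal.ofReal (if 0 < x then Real.exp (φ x) else 0)))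
    (hlaw₂ : Measure.map X₂ P
      = volume.withDensity (fun x => ENNReal.ofReal (if 0 < x then Real.exp (φ x) else 0)))
    (d : ℝ) (hd : 0 < d) (hP : 0 < P {ω | X₁ ω + X₂ ω > d}) :
    1 / 2 ≤ (∫ ω in {ω | X₁ ω + X₂ ω > d}, |X₁ ω - X₂ ω| / (X₁ ω + X₂ ω) ∂P)
      / (P {ω | X₁ ω + X₂ ω > d}).toReal := by
  classical
  set f : ℝ → ℝ := fun x => if 0 < x then Real.exp (φ x) else 0 with hfdef
  have hfm : Measurable f := meas_density hconv
  have hf0 : ∀ x, 0 ≤ f x := fun x => by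
    by_cases h : 0 < x <;> simp [hfdef, h, (Real.exp_pos _).le]
  have hsupp : ∀ x, x ≤ 0 → f x = 0 := fun x hx => by simp [hfdef, not_lt.mpr hx]
  set μ : Measure ℝ := volume.withDensity (fun x => ENNReal.ofReal (f x)) with hμ
  have hlaw₁' : Measure.map X₁ P = μ := hlaw₁
  have hlaw₂' : Measure.map X₂ P = μ := hlaw₂
  have hprobμ : IsProbabilityMeasure μ := by
    rw [← hlaw₁']; exact Measure.isProbabilityMeasure_map hX₁.aemeasurable
  have hjoint : Measure.map (fun ω => (X₁ ω, X₂ ω)) P = μ.prod μ := by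
    rw [(indepFun_iff_map_prod_eq_prod_map_map hX₁.aemeasurable hX₂.aemeasurable).mp hindep,
      hlaw₁', hlaw₂']
  set fE2 : ℝ × ℝ → ℝ≥0∞ := fun p => ENNReal.ofReal (f p.1) * ENNReal.ofReal (f p.2) with hfE2
  set m2 : Measure (ℝ × ℝ) := (volume : Measure ℝ).prod (volume : Measure ℝ) with hm2
  have hfm1 : Measurable fun x : ℝ => ENNReal.ofReal (f x) := hfm.ennreal_ofReal
  have hprodD : μ.prod μ = m2.withDensity fE2 := by
    refine (Measure.prod_eq (μ := μ) (ν := μ) (μν := m2.withDensity fE2) fun s t hs ht => ?_)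
    rw [withDensity_apply _ (hs.prod ht), hm2, ← Measure.prod_restrict,
      lintegral_prod_mul (hfm1.aemeasurable) (hfm1.aemeasurable),
      hμ, withDensity_apply _ hs, withDensity_apply _ ht]
  set q : ℝ × ℝ → ℝ := fun p => f p.1 * f p.2 with hq
  have hqm : Measurable q := (hfm.comp measurable_fst).mul (hfm.comp measurable_snd)
  have hq0 : ∀ p, 0 ≤ q p := fun p => mul_nonneg (hf0 _) (hf0 _)
  have hfE2q : fE2 = fun p => ENNReal.ofReal (q p) := by
    funext p
    simp only [hfE2, hq]
    rw [← ENNReal.ofReal_mul (hf0 p.1)]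
  set B : Set (ℝ × ℝ) := {p | d < p.1 + p.2} with hB
  have hBm : MeasurableSet B := measurableSet_lt measurable_const (measurable_fst.add measurable_snd)
  set A : Set Ω := {ω | X₁ ω + X₂ ω > d} with hA
  have hXm : Measurable fun ω => (X₁ ω, X₂ ω) := hX₁.prodMk hX₂
  have hPA : P A = (μ.prod μ) B := by
    rw [← hjoint, Measure.map_apply hXm hBm]
    rfl
  have hmass : ∫⁻ p, ENNReal.ofReal (q p) ∂m2 = 1 := by
    have : ∫⁻ p, fE2 p ∂m2 = (m2.withDensity fE2) Set.univ := by
      rw [withDensity_apply _ MeasurableSet.univ, Measure.restrict_univ]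
    rw [← hfE2q, this, ← hprodD]
    exact measure_univ
  have hqInt : Integrable q m2 := by
    refine ⟨hqm.aestronglyMeasurable, ?_⟩
    rw [hasFiniteIntegral_iff_ofReal (Filter.Eventually.of_forall hq0), hmass]
    exact ENNReal.one_lt_top
  set h : ℝ × ℝ → ℝ := fun p => |p.1 - p.2| / (p.1 + p.2) with hh
  have hhm : Measurable h := ((measurable_fst.sub measurable_snd).abs).div
    (measurable_fst.add measurable_snd)
  have hhb : ∀ p, q p ≠ 0 → 0 ≤ h p ∧ h p ≤ 1 := by
    intro p hp
    have h1 : 0 < p.1 := by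
      by_contra hc
      exact hp (by rw [hq]; simp [hsupp p.1 (le_of_not_gt hc)])
    have h2 : 0 < p.2 := by
      by_contra hc
      exact hp (by rw [hq]; simp [hsupp p.2 (le_of_not_gt hc)])
    have hsumpos : 0 < p.1 + p.2 := by linarith
    constructor
    · exact div_nonneg (abs_nonneg _) hsumpos.le
    · rw [hh]
      rw [div_le_one hsumpos]
      exact abs_le.mpr ⟨by linarith, by linarith⟩
  set J : ℝ × ℝ → ℝ := B.indicator (fun p => (h p - 1/2) * q p) with hJ
  have hJm : Measurable J := ((hhm.sub measurable_const).mul hqm).indicator hBm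
  have hJb : ∀ p, ‖J p‖ ≤ q p := by
    intro p
    rw [Real.norm_eq_abs]
    by_cases hpB : p ∈ B
    · rw [hJ, indicator_of_mem hpB]
      by_cases hq0' : q p = 0
      · simp [hq0']
      · obtain ⟨h0, h1⟩ := hhb p hq0'
        rw [abs_mul, abs_of_nonneg (hq0 p)]
        have hb1 : |h p - 1/2| ≤ 1 := abs_le.mpr ⟨by linarith, by linarith⟩
        nlinarith [hq0 p]
    · rw [hJ, indicator_of_notMem hpB]
      simpa using hq0 p
  have hJInt : Integrable J m2 :=
    Integrable.mono' hqInt hJm.aestronglyMeasurable (Filter.Eventually.of_forall hJb)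
  -- shear map
  have hSpres : MeasurePreserving (fun p : ℝ × ℝ => (p.2, p.1 - p.2)) m2 m2 := by
    have h1 : MeasurePreserving (fun p : ℝ × ℝ => (p.1, p.2 - p.1)) m2 m2 :=
      MeasurePreserving.skew_product (MeasurePreserving.id volume)
        (measurable_snd.sub measurable_fst)
        (Filter.Eventually.of_forall fun x => map_sub_right_eq_self volume x)
    exact h1.comp Measure.measurePreserving_swap
  have hJS : ∫ p, J p ∂m2 = ∫ p, J (p.2, p.1 - p.2) ∂m2 := by
    conv_lhs => rw [← hSpres.map_eq]
    exact integral_map hSpres.aemeasurable hJm.aestronglyMeasurable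
  have hJSInt : Integrable (fun p : ℝ × ℝ => J (p.2, p.1 - p.2)) m2 := by
    have := (integrable_map_measure (hJm.aestronglyMeasurable)
      hSpres.aemeasurable).mp (by rw [hSpres.map_eq]; exact hJInt)
    exact this
  have hkey : (0:ℝ) ≤ ∫ p, J p ∂m2 := by
    rw [hJS, hm2, integral_prod _ hJSInt]
    refine integral_nonneg_of_ae ?_
    filter_upwards [hJSInt.prod_right_ae] with s hsI
    by_cases hsd : d < s
    · have hs0 : 0 < s := hd.trans hsd
      have hform : (fun x : ℝ => J (x, s - x))
          = fun y => (|2*y - s|/s - 1/2) * (f y * f (s - y)) := by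
        funext y
        rw [hJ, indicator_of_mem (show ((y, s - y) : ℝ × ℝ) ∈ B by
          simp only [hB, Set.mem_setOf_eq]; simp; linarith)]
        simp only [hh, hq]
        rw [show y - (s - y) = 2*y - s by ring, show y + (s - y) = s by ring]
      have hmono : ∀ a b, s/2 ≤ a → a ≤ b → b < s → f a * f (s - a) ≤ f b * f (s - b) := by
        intro a b h1 h2 h3
        have ha0 : 0 < a := by linarith
        have hb0 : 0 < b := by linarith
        have hsa : 0 < s - a := by linarith
        have hsb : 0 < s - b := by linarith
        simp only [hfdef, if_pos ha0, if_pos hb0, if_pos hsa, if_pos hsb]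
        rw [← Real.exp_add, ← Real.exp_add]
        exact Real.exp_le_exp.mpr (convex_pair_mono hconv hs0 h1 h2 h3)
      calc (0:ℝ) ≤ ∫ y, (|2*y - s|/s - 1/2) * (f y * f (s - y)) :=
            slice_nonneg f hf0 hsupp hs0 hmono (by rw [← hform]; exact hsI)
        _ = ∫ x, J (x, s - x) := by rw [hform]
    · have hz : (fun x : ℝ => J (x, s - x)) = fun _ => 0 := by
        funext x
        rw [hJ, indicator_of_notMem]
        simp only [hB, Set.mem_setOf_eq]
        simp
        linarith
      rw [hz]
      simp
  -- integrability of h*q on B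
  have hN2int : IntegrableOn (fun p => h p * q p) B m2 := by
    refine Integrable.mono' hqInt.integrableOn ((hhm.mul hqm).aestronglyMeasurable)
      (Filter.Eventually.of_forall fun p => ?_)
    rw [Real.norm_eq_abs]
    by_cases hq0' : q p = 0
    · simp [hq0', hq0 p]
    · obtain ⟨h0, h1⟩ := hhb p hq0'
      rw [abs_mul, abs_of_nonneg (hq0 p), abs_of_nonneg h0]
      nlinarith [hq0 p]
  have hJint' : ∫ p, J p ∂m2
      = (∫ p in B, h p * q p ∂m2) - (1/2) * ∫ p in B, q p ∂m2 := by
    rw [hJ, integral_indicator hBm]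
    have : ∀ p, (h p - 1/2) * q p = h p * q p - (1/2) * (q p) := fun p => by ring
    rw [integral_congr_ae (Filter.Eventually.of_forall fun p => this p),
      integral_sub hN2int (hqInt.integrableOn.const_mul _), integral_const_mul]
  have hD2 : (P A).toReal = ∫ p in B, q p ∂m2 := by
    rw [hPA, hprodD, withDensity_apply _ hBm, hfE2q,
      ← ofReal_integral_eq_lintegral_ofReal hqInt.integrableOn
        (Filter.Eventually.of_forall hq0),
      ENNReal.toReal_ofReal (integral_nonneg hq0)]
  have hNum : ∫ ω in A, |X₁ ω - X₂ ω| / (X₁ ω + X₂ ω) ∂P = ∫ p in B, h p * q p ∂m2 := by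
    have e1 : ∫ ω in A, |X₁ ω - X₂ ω| / (X₁ ω + X₂ ω) ∂P = ∫ p in B, h p ∂(μ.prod μ) := by
      rw [← hjoint, setIntegral_map hBm hhm.aestronglyMeasurable hXm.aemeasurable]
      rfl
    have e2 : ∫ p in B, h p ∂(μ.prod μ) = ∫ p in B, q p * h p ∂m2 := by
      rw [hprodD]
      have hdens : m2.withDensity fE2
          = m2.withDensity (fun p => ((q p).toNNReal : ℝ≥0∞)) := by
        rw [hfE2q]; rfl
      rw [hdens, setIntegral_withDensity_eq_setIntegral_smul
        (hqm.real_toNNReal) _ hBm]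
      refine integral_congr_ae (Filter.Eventually.of_forall fun p => ?_)
      show (q p).toNNReal • h p = q p * h p
      rw [NNReal.smul_def, smul_eq_mul, Real.coe_toNNReal _ (hq0 p)]
    rw [e1, e2]
    refine integral_congr_ae (Filter.Eventually.of_forall fun p => ?_)
    show q p * h p = h p * q p
    ring
  have hPAne : P A ≠ ⊤ := measure_ne_top P A
  have hD2pos : 0 < ∫ p in B, q p ∂m2 := by
    rw [← hD2]
    exact ENNReal.toReal_pos (ne_of_gt hP) hPAne
  rw [hNum, hD2, le_div_iff₀ hD2pos]
  have := hkey
  rw [hJint'] at this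
  linarith
end

section
/- The minimum-variance unbiased estimator of Var(U_n) satisfies the algebraic identity (2/(n(n−1)))·(2(n−2)ζ̂_1 + ζ̂_2 − (2n−3)ζ̂_0) = U_n^2 − ζ̂_0, where ζ̂_0 = (1/n^{(4)}) Σ_{distinct i,j,k,l} h(X_i,X_j)h(X_k,X_l), ζ̂_1 = (1/n^{(3)}) Σ_{distinct i,j,k} h(X_i,X_j)h(X_i,X_k), ζ̂_2 = (1/C(n,2)) Σ_{i<j} h(X_i,X_j)^2, and U_n = (2/(n(n−1))) Σ_{i<j} h(X_i,X_j). -/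
open Finset

section Aux

variable {n : ℕ} (x : Fin n → ℝ) (h : ℝ → ℝ → ℝ)

private lemma pair_double (F : Fin n → Fin n → ℝ) (hF : ∀ i j, F i j = F j i) :
    ∑ p ∈ univ.filter (fun p : Fin n × Fin n => p.1 ≠ p.2), F p.1 p.2
      = 2 * ∑ p ∈ univ.filter (fun p : Fin n × Fin n => p.1 < p.2), F p.1 p.2 := by
  have hsplit := Finset.sum_filter_add_sum_filter_not
    (univ.filter (fun p : Fin n × Fin n => p.1 ≠ p.2))
    (fun p => p.1 < p.2) (fun p => F p.1 p.2)
  rw [Finset.filter_filter, Finset.filter_filter] at hsplit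
  have h1 : univ.filter (fun p : Fin n × Fin n => p.1 ≠ p.2 ∧ p.1 < p.2)
      = univ.filter (fun p : Fin n × Fin n => p.1 < p.2) := by
    ext p
    simp only [mem_filter, mem_univ, true_and]
    exact ⟨fun hp => hp.2, fun hp => ⟨ne_of_lt hp, hp⟩⟩
  have h2 : ∑ p ∈ univ.filter (fun p : Fin n × Fin n => p.1 ≠ p.2 ∧ ¬ p.1 < p.2),
        F p.1 p.2
      = ∑ p ∈ univ.filter (fun p : Fin n × Fin n => p.1 < p.2), F p.1 p.2 := by
    refine Finset.sum_nbij' Prod.swap Prod.swap ?_ ?_ ?_ ?_ ?_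
    · rintro ⟨i, j⟩ hp
      simp only [mem_filter, mem_univ, true_and] at hp ⊢
      exact (lt_or_gt_of_ne hp.1).resolve_left hp.2
    · rintro ⟨i, j⟩ hp
      simp only [mem_filter, mem_univ, true_and] at hp ⊢
      exact ⟨(ne_of_lt hp).symm, not_lt_of_gt hp⟩
    · intro p _; rfl
    · intro p _; rfl
    · rintro ⟨i, j⟩ _
      exact hF i j
  rw [h1, h2] at hsplit
  linarith [hsplit]

private lemma square_to_quad :
    (∑ p ∈ univ.filter (fun p : Fin n × Fin n => p.1 ≠ p.2), h (x p.1) (x p.2)) *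
      (∑ p ∈ univ.filter (fun p : Fin n × Fin n => p.1 ≠ p.2), h (x p.1) (x p.2))
    = ∑ t ∈ univ.filter
        (fun t : Fin n × Fin n × Fin n × Fin n => t.1 ≠ t.2.1 ∧ t.2.2.1 ≠ t.2.2.2),
        h (x t.1) (x t.2.1) * h (x t.2.2.1) (x t.2.2.2) := by
  rw [Finset.sum_mul_sum]
  rw [← Finset.sum_product']
  refine Finset.sum_nbij' (fun p => (p.1.1, p.1.2, p.2.1, p.2.2))
    (fun t => ((t.1, t.2.1), (t.2.2.1, t.2.2.2))) ?_ ?_ ?_ ?_ ?_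
  · rintro ⟨⟨a, b⟩, ⟨c, d⟩⟩ hp
    simp only [Finset.mem_product, mem_filter, mem_univ, true_and] at hp ⊢
    exact hp
  · rintro ⟨a, b, c, d⟩ ht
    simp only [Finset.mem_product, mem_filter, mem_univ, true_and] at ht ⊢
    exact ht
  · rintro ⟨⟨a, b⟩, ⟨c, d⟩⟩ _; rfl
  · rintro ⟨a, b, c, d⟩ _; rfl
  · rintro ⟨⟨a, b⟩, ⟨c, d⟩⟩ _; rfl

private lemma quad_partition :
    ∑ t ∈ univ.filter
        (fun t : Fin n × Fin n × Fin n × Fin n => t.1 ≠ t.2.1 ∧ t.2.2.1 ≠ t.2.2.2),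
        h (x t.1) (x t.2.1) * h (x t.2.2.1) (x t.2.2.2)
    = (∑ t ∈ univ.filter
          (fun t : Fin n × Fin n × Fin n × Fin n =>
            t.1 ≠ t.2.1 ∧ t.2.2.1 = t.1 ∧ t.2.2.2 = t.2.1),
          h (x t.1) (x t.2.1) * h (x t.2.2.1) (x t.2.2.2))
      + (∑ t ∈ univ.filter
          (fun t : Fin n × Fin n × Fin n × Fin n =>
            t.1 ≠ t.2.1 ∧ t.2.2.1 = t.1 ∧ t.2.2.2 ≠ t.1 ∧ t.2.2.2 ≠ t.2.1),
          h (x t.1) (x t.2.1) * h (x t.2.2.1) (x t.2.2.2))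
      + (∑ t ∈ univ.filter
          (fun t : Fin n × Fin n × Fin n × Fin n =>
            t.1 ≠ t.2.1 ∧ t.2.2.1 = t.2.1 ∧ t.2.2.2 = t.1),
          h (x t.1) (x t.2.1) * h (x t.2.2.1) (x t.2.2.2))
      + (∑ t ∈ univ.filter
          (fun t : Fin n × Fin n × Fin n × Fin n =>
            t.1 ≠ t.2.1 ∧ t.2.2.1 = t.2.1 ∧ t.2.2.2 ≠ t.1 ∧ t.2.2.2 ≠ t.2.1),
          h (x t.1) (x t.2.1) * h (x t.2.2.1) (x t.2.2.2))
      + (∑ t ∈ univ.filter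
          (fun t : Fin n × Fin n × Fin n × Fin n =>
            t.1 ≠ t.2.1 ∧ t.2.2.1 ≠ t.1 ∧ t.2.2.1 ≠ t.2.1 ∧ t.2.2.2 = t.1),
          h (x t.1) (x t.2.1) * h (x t.2.2.1) (x t.2.2.2))
      + (∑ t ∈ univ.filter
          (fun t : Fin n × Fin n × Fin n × Fin n =>
            t.1 ≠ t.2.1 ∧ t.2.2.1 ≠ t.1 ∧ t.2.2.1 ≠ t.2.1 ∧ t.2.2.2 = t.2.1),
          h (x t.1) (x t.2.1) * h (x t.2.2.1) (x t.2.2.2))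
      + (∑ t ∈ univ.filter
          (fun t : Fin n × Fin n × Fin n × Fin n =>
            t.1 ≠ t.2.1 ∧ t.1 ≠ t.2.2.1 ∧ t.1 ≠ t.2.2.2 ∧
            t.2.1 ≠ t.2.2.1 ∧ t.2.1 ≠ t.2.2.2 ∧ t.2.2.1 ≠ t.2.2.2),
          h (x t.1) (x t.2.1) * h (x t.2.2.1) (x t.2.2.2)) := by
  simp only [Finset.sum_filter, ← Finset.sum_add_distrib]
  refine Finset.sum_congr rfl ?_
  rintro ⟨a, b, c, d⟩ -
  by_cases hab : a = b <;> by_cases hcd : c = d <;> by_cases hca : c = a <;>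
    by_cases hcb : c = b <;> by_cases hda : d = a <;> by_cases hdb : d = b <;>
    simp_all [eq_comm]

end Aux

section Leaves

private lemma leafC1 {n : ℕ} (x : Fin n → ℝ) (h : ℝ → ℝ → ℝ) :
    ∑ t ∈ univ.filter
        (fun t : Fin n × Fin n × Fin n × Fin n =>
          t.1 ≠ t.2.1 ∧ t.2.2.1 = t.1 ∧ t.2.2.2 = t.2.1),
        h (x t.1) (x t.2.1) * h (x t.2.2.1) (x t.2.2.2)
    = ∑ p ∈ univ.filter (fun p : Fin n × Fin n => p.1 ≠ p.2), (h (x p.1) (x p.2)) ^ 2 := by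
  refine Finset.sum_nbij' (fun t => (t.1, t.2.1)) (fun p => (p.1, p.2, p.1, p.2)) ?_ ?_ ?_ ?_ ?_
  · rintro ⟨a, b, c, d⟩ ht
    simp only [mem_filter, mem_univ, true_and, and_true, Fin.ext_iff] at ht ⊢
    omega
  · rintro ⟨i, j⟩ hp
    simp only [mem_filter, mem_univ, true_and, and_true, Fin.ext_iff] at hp ⊢
    omega
  · rintro ⟨a, b, c, d⟩ ht
    simp only [mem_filter, mem_univ, true_and] at ht
    obtain ⟨h1, h2, h3⟩ := ht
    subst h2; subst h3; rfl
  · rintro ⟨i, j⟩ _; rfl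
  · rintro ⟨a, b, c, d⟩ ht
    simp only [mem_filter, mem_univ, true_and] at ht
    obtain ⟨h1, h2, h3⟩ := ht
    rw [h2, h3, pow_two]

private lemma leafC3 {n : ℕ} (x : Fin n → ℝ) (h : ℝ → ℝ → ℝ) (hsymm : ∀ a b, h a b = h b a) :
    ∑ t ∈ univ.filter
        (fun t : Fin n × Fin n × Fin n × Fin n =>
          t.1 ≠ t.2.1 ∧ t.2.2.1 = t.2.1 ∧ t.2.2.2 = t.1),
        h (x t.1) (x t.2.1) * h (x t.2.2.1) (x t.2.2.2)
    = ∑ p ∈ univ.filter (fun p : Fin n × Fin n => p.1 ≠ p.2), (h (x p.1) (x p.2)) ^ 2 := by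
  refine Finset.sum_nbij' (fun t => (t.1, t.2.1)) (fun p => (p.1, p.2, p.2, p.1)) ?_ ?_ ?_ ?_ ?_
  · rintro ⟨a, b, c, d⟩ ht
    simp only [mem_filter, mem_univ, true_and, and_true, Fin.ext_iff] at ht ⊢
    omega
  · rintro ⟨i, j⟩ hp
    simp only [mem_filter, mem_univ, true_and, and_true, Fin.ext_iff] at hp ⊢
    omega
  · rintro ⟨a, b, c, d⟩ ht
    simp only [mem_filter, mem_univ, true_and] at ht
    obtain ⟨h1, h2, h3⟩ := ht
    subst h2; subst h3; rfl
  · rintro ⟨i, j⟩ _; rfl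
  · rintro ⟨a, b, c, d⟩ ht
    simp only [mem_filter, mem_univ, true_and] at ht
    obtain ⟨h1, h2, h3⟩ := ht
    rw [h2, h3, pow_two, hsymm (x b) (x a)]

private lemma leafC2 {n : ℕ} (x : Fin n → ℝ) (h : ℝ → ℝ → ℝ) :
    ∑ t ∈ univ.filter
        (fun t : Fin n × Fin n × Fin n × Fin n =>
          t.1 ≠ t.2.1 ∧ t.2.2.1 = t.1 ∧ t.2.2.2 ≠ t.1 ∧ t.2.2.2 ≠ t.2.1),
        h (x t.1) (x t.2.1) * h (x t.2.2.1) (x t.2.2.2)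
    = ∑ t ∈ univ.filter
        (fun t : Fin n × Fin n × Fin n => t.1 ≠ t.2.1 ∧ t.1 ≠ t.2.2 ∧ t.2.1 ≠ t.2.2),
        h (x t.1) (x t.2.1) * h (x t.1) (x t.2.2) := by
  refine Finset.sum_nbij' (fun t => (t.1, t.2.1, t.2.2.2)) (fun s => (s.1, s.2.1, s.1, s.2.2))
    ?_ ?_ ?_ ?_ ?_
  · rintro ⟨a, b, c, d⟩ ht
    simp only [mem_filter, mem_univ, true_and, and_true, Fin.ext_iff] at ht ⊢
    omega
  · rintro ⟨i, j, k⟩ hs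
    simp only [mem_filter, mem_univ, true_and, and_true, Fin.ext_iff] at hs ⊢
    omega
  · rintro ⟨a, b, c, d⟩ ht
    simp only [mem_filter, mem_univ, true_and] at ht
    obtain ⟨h1, h2, h3, h4⟩ := ht
    subst h2; rfl
  · rintro ⟨i, j, k⟩ _; rfl
  · rintro ⟨a, b, c, d⟩ ht
    simp only [mem_filter, mem_univ, true_and] at ht
    obtain ⟨h1, h2, h3, h4⟩ := ht
    rw [h2]

private lemma leafC4 {n : ℕ} (x : Fin n → ℝ) (h : ℝ → ℝ → ℝ) (hsymm : ∀ a b, h a b = h b a) :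
    ∑ t ∈ univ.filter
        (fun t : Fin n × Fin n × Fin n × Fin n =>
          t.1 ≠ t.2.1 ∧ t.2.2.1 = t.2.1 ∧ t.2.2.2 ≠ t.1 ∧ t.2.2.2 ≠ t.2.1),
        h (x t.1) (x t.2.1) * h (x t.2.2.1) (x t.2.2.2)
    = ∑ t ∈ univ.filter
        (fun t : Fin n × Fin n × Fin n => t.1 ≠ t.2.1 ∧ t.1 ≠ t.2.2 ∧ t.2.1 ≠ t.2.2),
        h (x t.1) (x t.2.1) * h (x t.1) (x t.2.2) := by
  refine Finset.sum_nbij' (fun t => (t.2.1, t.1, t.2.2.2)) (fun s => (s.2.1, s.1, s.1, s.2.2))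
    ?_ ?_ ?_ ?_ ?_
  · rintro ⟨a, b, c, d⟩ ht
    simp only [mem_filter, mem_univ, true_and, and_true, Fin.ext_iff] at ht ⊢
    omega
  · rintro ⟨i, j, k⟩ hs
    simp only [mem_filter, mem_univ, true_and, and_true, Fin.ext_iff] at hs ⊢
    omega
  · rintro ⟨a, b, c, d⟩ ht
    simp only [mem_filter, mem_univ, true_and] at ht
    obtain ⟨h1, h2, h3, h4⟩ := ht
    subst h2; rfl
  · rintro ⟨i, j, k⟩ _; rfl
  · rintro ⟨a, b, c, d⟩ ht
    simp only [mem_filter, mem_univ, true_and] at ht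
    obtain ⟨h1, h2, h3, h4⟩ := ht
    rw [h2, hsymm (x a) (x b)]

private lemma leafC5 {n : ℕ} (x : Fin n → ℝ) (h : ℝ → ℝ → ℝ) (hsymm : ∀ a b, h a b = h b a) :
    ∑ t ∈ univ.filter
        (fun t : Fin n × Fin n × Fin n × Fin n =>
          t.1 ≠ t.2.1 ∧ t.2.2.1 ≠ t.1 ∧ t.2.2.1 ≠ t.2.1 ∧ t.2.2.2 = t.1),
        h (x t.1) (x t.2.1) * h (x t.2.2.1) (x t.2.2.2)
    = ∑ t ∈ univ.filter
        (fun t : Fin n × Fin n × Fin n => t.1 ≠ t.2.1 ∧ t.1 ≠ t.2.2 ∧ t.2.1 ≠ t.2.2),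
        h (x t.1) (x t.2.1) * h (x t.1) (x t.2.2) := by
  refine Finset.sum_nbij' (fun t => (t.1, t.2.1, t.2.2.1)) (fun s => (s.1, s.2.1, s.2.2, s.1))
    ?_ ?_ ?_ ?_ ?_
  · rintro ⟨a, b, c, d⟩ ht
    simp only [mem_filter, mem_univ, true_and, and_true, Fin.ext_iff] at ht ⊢
    omega
  · rintro ⟨i, j, k⟩ hs
    simp only [mem_filter, mem_univ, true_and, and_true, Fin.ext_iff] at hs ⊢
    omega
  · rintro ⟨a, b, c, d⟩ ht
    simp only [mem_filter, mem_univ, true_and] at ht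
    obtain ⟨h1, h2, h3, h4⟩ := ht
    subst h4; rfl
  · rintro ⟨i, j, k⟩ _; rfl
  · rintro ⟨a, b, c, d⟩ ht
    simp only [mem_filter, mem_univ, true_and] at ht
    obtain ⟨h1, h2, h3, h4⟩ := ht
    rw [h4, hsymm (x c) (x a)]

private lemma leafC6 {n : ℕ} (x : Fin n → ℝ) (h : ℝ → ℝ → ℝ) (hsymm : ∀ a b, h a b = h b a) :
    ∑ t ∈ univ.filter
        (fun t : Fin n × Fin n × Fin n × Fin n =>
          t.1 ≠ t.2.1 ∧ t.2.2.1 ≠ t.1 ∧ t.2.2.1 ≠ t.2.1 ∧ t.2.2.2 = t.2.1),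
        h (x t.1) (x t.2.1) * h (x t.2.2.1) (x t.2.2.2)
    = ∑ t ∈ univ.filter
        (fun t : Fin n × Fin n × Fin n => t.1 ≠ t.2.1 ∧ t.1 ≠ t.2.2 ∧ t.2.1 ≠ t.2.2),
        h (x t.1) (x t.2.1) * h (x t.1) (x t.2.2) := by
  refine Finset.sum_nbij' (fun t => (t.2.1, t.1, t.2.2.1)) (fun s => (s.2.1, s.1, s.2.2, s.1))
    ?_ ?_ ?_ ?_ ?_
  · rintro ⟨a, b, c, d⟩ ht
    simp only [mem_filter, mem_univ, true_and, and_true, Fin.ext_iff] at ht ⊢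
    omega
  · rintro ⟨i, j, k⟩ hs
    simp only [mem_filter, mem_univ, true_and, and_true, Fin.ext_iff] at hs ⊢
    omega
  · rintro ⟨a, b, c, d⟩ ht
    simp only [mem_filter, mem_univ, true_and] at ht
    obtain ⟨h1, h2, h3, h4⟩ := ht
    subst h4; rfl
  · rintro ⟨i, j, k⟩ _; rfl
  · rintro ⟨a, b, c, d⟩ ht
    simp only [mem_filter, mem_univ, true_and] at ht
    obtain ⟨h1, h2, h3, h4⟩ := ht
    rw [h4, hsymm (x a) (x b), hsymm (x c) (x b)]

end Leaves

/-- The unbiased variance estimator identity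
`(2/(n(n−1)))·(2(n−2)ζ̂₁ + ζ̂₂ − (2n−3)ζ̂₀) = U_n² − ζ̂₀` for `n ≥ 4`. -/
theorem unbiased_variance_estimator_identity (n : ℕ) (hn : 4 ≤ n) (x : Fin n → ℝ)
    (h : ℝ → ℝ → ℝ) (hsymm : ∀ a b, h a b = h b a)
    (ζ₀ ζ₁ ζ₂ U : ℝ)
    (hζ₀ : ζ₀ = (1 / ((n : ℝ) * ((n : ℝ) - 1) * ((n : ℝ) - 2) * ((n : ℝ) - 3))) *
        ∑ t ∈ Finset.univ.filter
            (fun t : Fin n × Fin n × Fin n × Fin n =>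
              t.1 ≠ t.2.1 ∧ t.1 ≠ t.2.2.1 ∧ t.1 ≠ t.2.2.2 ∧
              t.2.1 ≠ t.2.2.1 ∧ t.2.1 ≠ t.2.2.2 ∧ t.2.2.1 ≠ t.2.2.2),
          h (x t.1) (x t.2.1) * h (x t.2.2.1) (x t.2.2.2))
    (hζ₁ : ζ₁ = (1 / ((n : ℝ) * ((n : ℝ) - 1) * ((n : ℝ) - 2))) *
        ∑ t ∈ Finset.univ.filter
            (fun t : Fin n × Fin n × Fin n => t.1 ≠ t.2.1 ∧ t.1 ≠ t.2.2 ∧ t.2.1 ≠ t.2.2),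
          h (x t.1) (x t.2.1) * h (x t.1) (x t.2.2))
    (hζ₂ : ζ₂ = (1 / (n.choose 2 : ℝ)) *
        ∑ p ∈ Finset.univ.filter (fun p : Fin n × Fin n => p.1 < p.2),
          (h (x p.1) (x p.2)) ^ 2)
    (hU : U = (2 / ((n : ℝ) * ((n : ℝ) - 1))) *
        ∑ p ∈ Finset.univ.filter (fun p : Fin n × Fin n => p.1 < p.2),
          h (x p.1) (x p.2)) :
    (2 / ((n : ℝ) * ((n : ℝ) - 1))) *
        (2 * ((n : ℝ) - 2) * ζ₁ + ζ₂ - (2 * (n : ℝ) - 3) * ζ₀)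
      = U ^ 2 - ζ₀ := by
  -- abbreviations
  have e1 := square_to_quad x h
  have e2 := quad_partition x h
  rw [leafC1 x h, leafC2 x h, leafC3 x h hsymm, leafC4 x h hsymm, leafC5 x h hsymm,
    leafC6 x h hsymm] at e2
  have hT : ∑ p ∈ univ.filter (fun p : Fin n × Fin n => p.1 ≠ p.2), h (x p.1) (x p.2)
      = 2 * ∑ p ∈ univ.filter (fun p : Fin n × Fin n => p.1 < p.2), h (x p.1) (x p.2) := by
    have := pair_double (fun i j => h (x i) (x j)) (fun i j => hsymm (x i) (x j))
    beta_reduce at this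
    exact this
  have hP2 : ∑ p ∈ univ.filter (fun p : Fin n × Fin n => p.1 ≠ p.2), (h (x p.1) (x p.2)) ^ 2
      = 2 * ∑ p ∈ univ.filter (fun p : Fin n × Fin n => p.1 < p.2), (h (x p.1) (x p.2)) ^ 2 := by
    have := pair_double (fun i j => (h (x i) (x j)) ^ 2)
      (fun i j => by show (h (x i) (x j)) ^ 2 = (h (x j) (x i)) ^ 2; rw [hsymm (x i) (x j)])
    beta_reduce at this
    exact this
  rw [hT] at e1
  rw [hP2] at e2
  rw [e2] at e1
  -- now e1 : (2 * Sp) * (2 * Sp) = 2*Sq + P3s + 2*Sq + P3s + P3s + P3s + P4s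
  set Sp := ∑ p ∈ univ.filter (fun p : Fin n × Fin n => p.1 < p.2), h (x p.1) (x p.2) with hSp
  set Sq := ∑ p ∈ univ.filter (fun p : Fin n × Fin n => p.1 < p.2), (h (x p.1) (x p.2)) ^ 2
    with hSq
  set P3s := ∑ t ∈ univ.filter
      (fun t : Fin n × Fin n × Fin n => t.1 ≠ t.2.1 ∧ t.1 ≠ t.2.2 ∧ t.2.1 ≠ t.2.2),
      h (x t.1) (x t.2.1) * h (x t.1) (x t.2.2) with hP3s
  set P4s := ∑ t ∈ univ.filter
      (fun t : Fin n × Fin n × Fin n × Fin n =>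
        t.1 ≠ t.2.1 ∧ t.1 ≠ t.2.2.1 ∧ t.1 ≠ t.2.2.2 ∧
        t.2.1 ≠ t.2.2.1 ∧ t.2.1 ≠ t.2.2.2 ∧ t.2.2.1 ≠ t.2.2.2),
      h (x t.1) (x t.2.1) * h (x t.2.2.1) (x t.2.2.2) with hP4s
  have key : P4s = (2 * Sp) * (2 * Sp) - 4 * Sq - 4 * P3s := by linarith [e1]
  -- numeric facts
  have hN : (4 : ℝ) ≤ (n : ℝ) := by exact_mod_cast hn
  have h0 : (n : ℝ) ≠ 0 := by positivity
  have h1 : (n : ℝ) - 1 ≠ 0 := by intro hc; linarith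
  have h2 : (n : ℝ) - 2 ≠ 0 := by intro hc; linarith
  have h3 : (n : ℝ) - 3 ≠ 0 := by intro hc; linarith
  have hchoose : ((n.choose 2 : ℕ) : ℝ) = (n : ℝ) * ((n : ℝ) - 1) / 2 := by
    rw [Nat.cast_choose_two]
  rw [hζ₀, hζ₁, hζ₂, hU, hchoose, key]
  field_simp
  ring
end
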